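/- arXiv:1902.05050 — 9 statements merged into one kernel-verified Lean document; each statement's English description precedes it below -/
import Mathlib

section
/- Exponential convergence of the fluid solution (Theorem 2). Let α be a DDE initial condition with associated fluid solution (a,b). Define C₁ = sup_{h ≤ s ≤ 2h} |a(s) − h|, κ(r) = max{ 3/4, exp(−h/(3(r + h))) } for r ≥ 0, and μ = −(1/(2h)) log(κ(C₁/2)). Then for all t ≥ 4h: |b(t + h) − 2h| = |a(t) − h| ≤ C₁ · κ(C₁/2)^{−3/2} · e^{−μ t}. -/
open MeasureTheory Set Filter Topology

noncomputable section

lemma constAux {f : ℝ → ℝ} {c d : ℝ} (hcd : c < d) (hf : ContinuousOn f (Set.Icc c d))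
    (hder : ∀ x ∈ Set.Ioo c d, HasDerivAt f 0 x) : f d = f c := by
  have key : ∀ s ∈ Set.Ioc c d, f d = f s := by
    intro s hs
    have hsub : Set.Icc s d ⊆ Set.Icc c d := Set.Icc_subset_Icc hs.1.le le_rfl
    have := constant_of_has_deriv_right_zero (f := f) (a := s) (b := d)
      (hf.mono hsub) (fun x hx => (hder x ⟨lt_of_lt_of_le hs.1 hx.1, hx.2⟩).hasDerivWithinAt)
    exact this d ⟨hs.2, le_rfl⟩
  have hne : (𝓝[Set.Ioc c d] c).NeBot := by
    rw [← mem_closure_iff_nhdsWithin_neBot, closure_Ioc hcd.ne]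
    exact ⟨le_rfl, hcd.le⟩
  have h1 : Tendsto f (𝓝[Set.Ioc c d] c) (𝓝 (f c)) :=
    (hf.continuousWithinAt ⟨le_rfl, hcd.le⟩).mono Set.Ioc_subset_Icc_self
  have h2 : Tendsto f (𝓝[Set.Ioc c d] c) (𝓝 (f d)) := by
    refine Tendsto.congr' ?_ tendsto_const_nhds
    filter_upwards [self_mem_nhdsWithin] with s hs
    exact key s hs
  exact tendsto_nhds_unique h2 h1

lemma barrierAux
    (h C1 D ε : ℝ) (f g g' d : ℝ → ℝ)
    (hh : 0 < h) (hD : 0 < D) (hε : 0 < ε)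
    (hf_cont : ContinuousOn f (Set.Ici h))
    (hg_cont : Continuous g)
    (hg_deriv : ∀ t, 2*h < t → HasDerivAt g (g' t) t)
    (hinit : ∀ t ∈ Set.Icc h (2*h), f t ≤ C1 * g t)
    (hd : ∀ t, 2*h < t → (∀ s, h ≤ s → s < t → f s ≤ C1 * g s + ε) → 0 < d t ∧ d t ≤ D)
    (hkey : ∀ t, 2*h < t →
      C1 * g (t - h) + ε - 2*(C1 * g t + ε) < 0 ∧
      (C1 * g (t - h) + ε - 2*(C1 * g t + ε))/D < C1 * g' t)
    (hf' : ∀ t, 2*h < t → HasDerivAt f ((f (t - h) - 2 * f t) / d t) t) :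
    ∀ t, h ≤ t → f t ≤ C1 * g t + ε := by
  by_contra hcon
  push_neg at hcon
  obtain ⟨t0, ht0, hft0⟩ := hcon
  set B : ℝ → ℝ := fun t => C1 * g t + ε with hB
  set S : Set ℝ := {t | h ≤ t ∧ B t < f t} with hS
  have hSne : S.Nonempty := ⟨t0, ht0, hft0⟩
  have hSbdd : BddBelow S := ⟨h, fun s hs => hs.1⟩
  set t1 := sInf S with ht1def
  have ht1h : h ≤ t1 := le_csInf hSne (fun s hs => hs.1)
  have hBcont : Continuous B := (continuous_const.mul hg_cont).add continuous_const
  have hnotS : ∀ s, h ≤ s → s < t1 → f s ≤ B s := by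
    intro s hs hst
    by_contra hc
    push_neg at hc
    exact absurd (csInf_le hSbdd ⟨hs, hc⟩) (not_le.2 hst)
  have ht1cl : t1 ∈ closure S := csInf_mem_closure hSne hSbdd
  have hfB1 : B t1 ≤ f t1 := by
    have hFclosed : IsClosed (Set.Ici h ∩ (fun t => f t - B t) ⁻¹' Set.Ici 0) :=
      (hf_cont.sub hBcont.continuousOn).preimage_isClosed_of_isClosed isClosed_Ici isClosed_Ici
    have hsub : S ⊆ Set.Ici h ∩ (fun t => f t - B t) ⁻¹' Set.Ici 0 :=
      fun s hs => ⟨hs.1, by simpa using hs.2.le⟩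
    have := (closure_minimal hsub hFclosed) ht1cl
    have h0 : (0:ℝ) ≤ f t1 - B t1 := this.2
    linarith
  have hS2h : ∀ s ∈ S, 2*h < s := by
    intro s hs
    by_contra hle
    push_neg at hle
    have h1 : f s ≤ C1 * g s := hinit s ⟨hs.1, hle⟩
    have h2 : B s < f s := hs.2
    simp only [hB] at h2
    linarith
  have ht1gt : 2*h < t1 := by
    rcases lt_or_eq_of_le (le_csInf hSne (fun s hs => (hS2h s hs).le)) with hlt | heq
    · exact hlt
    · exfalso
      have h2 : f t1 ≤ C1 * g t1 := hinit t1 ⟨ht1h, heq.symm.le⟩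
      simp only [hB] at hfB1
      linarith
  have hder_f := hf' t1 ht1gt
  have hd1 := hd t1 ht1gt hnotS
  have hkey1 := hkey t1 ht1gt
  have h1h : f (t1 - h) ≤ B (t1 - h) := hnotS _ (by linarith) (by linarith)
  set Nbar := C1 * g (t1 - h) + ε - 2*(C1 * g t1 + ε) with hNbar
  have hNle : f (t1 - h) - 2 * f t1 ≤ Nbar := by
    simp only [hB] at h1h hfB1
    simp only [hNbar]
    linarith
  have hslope : (f (t1 - h) - 2 * f t1) / d t1 < C1 * g' t1 := by
    have h1 : (f (t1 - h) - 2 * f t1) / d t1 ≤ Nbar / d t1 :=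
      (div_le_div_iff_of_pos_right hd1.1).2 hNle
    have h2 : Nbar / d t1 ≤ Nbar / D := by
      rw [div_le_div_iff₀ hd1.1 hD]
      nlinarith [hkey1.1, hd1.2]
    linarith [hkey1.2]
  have hderB : HasDerivAt B (C1 * g' t1) t1 := ((hg_deriv t1 ht1gt).const_mul C1).add_const ε
  have hφ : HasDerivAt (fun t => f t - B t) ((f (t1 - h) - 2 * f t1) / d t1 - C1 * g' t1) t1 :=
    hder_f.sub hderB
  have hm : (f (t1 - h) - 2 * f t1) / d t1 - C1 * g' t1 < 0 := by linarith
  have hts : Tendsto (slope (fun t => f t - B t) t1) (𝓝[<] t1)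
      (𝓝 ((f (t1 - h) - 2 * f t1) / d t1 - C1 * g' t1)) :=
    (hasDerivAt_iff_tendsto_slope.1 hφ).mono_left
      (nhdsWithin_mono _ (fun x hx => ne_of_lt hx))
  have hev1 : ∀ᶠ s in 𝓝[<] t1, slope (fun t => f t - B t) t1 s < 0 :=
    hts.eventually_lt_const hm
  have hev2 : Set.Ioo h t1 ∈ 𝓝[<] t1 := Ioo_mem_nhdsLT_of_mem ⟨by linarith, le_rfl⟩
  obtain ⟨s, hs1, hs2⟩ := (hev1.and hev2).exists
  have hslt : s < t1 := hs2.2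
  have hfs : f s ≤ B s := hnotS s hs2.1.le hslt
  rw [slope_def_field] at hs1
  have hden : s - t1 < 0 := by linarith
  rcases div_neg_iff.1 hs1 with ⟨hnum, hd2⟩ | ⟨hnum, hd2⟩
  · linarith
  · linarith


/-- `α = (a_h, u)` is a DDE initial condition: `a_h > 0` and `u : [0,h] → ℝ` is
integrable with `0 ≤ u(t) ≤ 2`. -/
def IsDDEInit (h ah : ℝ) (u : ℝ → ℝ) : Prop :=
  0 < ah ∧ MeasureTheory.IntegrableOn u (Set.Icc 0 h) ∧
    ∀ t ∈ Set.Icc (0:ℝ) h, 0 ≤ u t ∧ u t ≤ 2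

/-- `(a, b)` is the fluid solution associated to the DDE initial condition `(a_h, u)`. -/
def IsFluidSolution (h ah : ℝ) (u : ℝ → ℝ) (a b : ℝ → ℝ) : Prop :=
  ContinuousOn a (Set.Ici h) ∧ ContinuousOn b (Set.Ici h) ∧
  (∀ t ∈ Set.Icc h (2*h), b t = ah + t - h + ∫ s in (t-h)..h, u s) ∧
  a h = ah ∧
  (∀ t ∈ Set.Ioc h (2*h), HasDerivWithinAt a (1 - 2 * a t / b t) (Set.Icc h (2*h)) t) ∧
  (∀ t, 2*h < t → HasDerivAt a (1 - 2 * a t / b t) t ∧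
    HasDerivAt b (1 - 2 * a (t - h) / b (t - h)) t)

set_option maxHeartbeats 1000000 in
/-- **Theorem 2 (exponential convergence of the fluid solution).**
Let `α` be a DDE initial condition with associated fluid solution `(a, b)`. Define
`C₁ = sup_{h ≤ s ≤ 2h} |a(s) - h|`, `κ(r) = max(3/4, exp(-h/(3(r+h))))` and
`μ = -(1/(2h)) log κ(C₁/2)`. Then for all `t ≥ 4h`,
`|b(t+h) - 2h| = |a(t) - h| ≤ C₁ κ(C₁/2)^{-3/2} e^{-μ t}`. -/
theorem tangle_fluid_exponential_convergence
    (h ah : ℝ) (u : ℝ → ℝ) (hh : 0 < h)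
    (hα : IsDDEInit h ah u)
    (a b : ℝ → ℝ) (hfluid : IsFluidSolution h ah u a b)
    (C1 : ℝ) (hC1 : C1 = ⨆ s ∈ Set.Icc h (2*h), |a s - h|)
    (κ : ℝ → ℝ) (hκ : ∀ r, κ r = max (3/4) (Real.exp (-h / (3*(r + h)))))
    (μ : ℝ) (hμ : μ = -(1/(2*h)) * Real.log (κ (C1/2))) :
    ∀ t : ℝ, 4*h ≤ t →
      |b (t + h) - 2*h| = |a t - h| ∧
      |a t - h| ≤ C1 * (κ (C1/2)) ^ (-(3:ℝ)/2) * Real.exp (-μ * t) := by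
  obtain ⟨hahpos, hu_int, hu_bnd⟩ := hα
  obtain ⟨acont, bcont, bform, hah, aD1, aD2⟩ := hfluid
  have h2h : h < 2*h := by linarith
  -- Step 1 : b (t+h) = a t + h
  have hGcont : ContinuousOn (fun t => b (t + h) - a t) (Set.Ici h) := by
    refine ContinuousOn.sub ?_ acont
    refine bcont.comp (Continuous.continuousOn (by continuity)) ?_
    intro x hx
    simp only [Set.mem_Ici] at *
    linarith
  have hGder1 : ∀ x ∈ Set.Ioo h (2*h), HasDerivAt (fun t => b (t + h) - a t) 0 x := by
    intro x hx
    have hax : HasDerivAt a (1 - 2 * a x / b x) x :=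
      (aD1 x ⟨hx.1, hx.2.le⟩).hasDerivAt (Icc_mem_nhds hx.1 hx.2)
    have hbx : HasDerivAt b (1 - 2 * a (x + h - h) / b (x + h - h)) (x + h) :=
      (aD2 (x + h) (by linarith [hx.1])).2
    rw [add_sub_cancel_right] at hbx
    have hbx' : HasDerivAt (fun t => b (t + h)) ((1 - 2 * a x / b x) * 1) x :=
      HasDerivAt.comp x hbx ((hasDerivAt_id x).add_const h)
    have := hbx'.sub hax
    rw [show (0:ℝ) = (1 - 2 * a x / b x) * 1 - (1 - 2 * a x / b x) by ring]
    exact this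
  have hGder2 : ∀ x, 2*h < x → HasDerivAt (fun t => b (t + h) - a t) 0 x := by
    intro x hx
    have hax : HasDerivAt a (1 - 2 * a x / b x) x := (aD2 x hx).1
    have hbx : HasDerivAt b (1 - 2 * a (x + h - h) / b (x + h - h)) (x + h) :=
      (aD2 (x + h) (by linarith)).2
    rw [add_sub_cancel_right] at hbx
    have hbx' : HasDerivAt (fun t => b (t + h)) ((1 - 2 * a x / b x) * 1) x :=
      HasDerivAt.comp x hbx ((hasDerivAt_id x).add_const h)
    have := hbx'.sub hax
    rw [show (0:ℝ) = (1 - 2 * a x / b x) * 1 - (1 - 2 * a x / b x) by ring]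
    exact this
  have hGconst : ∀ t, h ≤ t → b (t + h) - a t = b (h + h) - a h := by
    intro t ht
    rcases eq_or_lt_of_le ht with heq | hlt
    · rw [← heq]
    rcases le_or_gt t (2*h) with hle | hgt
    · exact constAux hlt (hGcont.mono (fun x hx => hx.1))
        (fun x hx => hGder1 x ⟨hx.1, lt_of_lt_of_le hx.2 hle⟩)
    · have e1 : b (2*h + h) - a (2*h) = b (h + h) - a h :=
        constAux h2h (hGcont.mono (fun x hx => hx.1)) (fun x hx => hGder1 x hx)
      have e2 : b (t + h) - a t = b (2*h + h) - a (2*h) :=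
        constAux hgt (hGcont.mono (fun x hx => le_trans h2h.le hx.1)) (fun x hx => hGder2 x hx.1)
      rw [e2, e1]
  have hb2h : b (h + h) = ah + h := by
    have hbf := bform (2*h) ⟨h2h.le, le_rfl⟩
    have h1 : (2*h - h) = h := by ring
    rw [h1, intervalIntegral.integral_same] at hbf
    rw [show h + h = 2*h by ring, hbf]
    ring
  have hbshift : ∀ t, h ≤ t → b (t + h) = a t + h := by
    intro t ht
    have := hGconst t ht
    rw [hb2h, hah] at this
    linarith
  have hbeq : ∀ t, 2*h ≤ t → b t = a (t - h) + h := by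
    intro t ht
    have := hbshift (t - h) (by linarith)
    rwa [sub_add_cancel] at this
  -- positivity of b on [h, 2h]
  have hbpos1 : ∀ t ∈ Set.Icc h (2*h), 0 < b t := by
    intro t ht
    rw [bform t ht]
    have hint : 0 ≤ ∫ s in (t - h)..h, u s :=
      intervalIntegral.integral_nonneg (by linarith [ht.2])
        (fun s hs => (hu_bnd s ⟨by linarith [hs.1, ht.1], hs.2⟩).1)
    linarith [ht.1]
  -- positivity of a
  have hapos : ∀ t, h ≤ t → 0 < a t := by
    by_contra hcon
    push_neg at hcon
    obtain ⟨t', ht', hat'⟩ := hcon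
    set T : Set ℝ := Set.Ici h ∩ a ⁻¹' Set.Iic 0 with hT
    have hTne : T.Nonempty := ⟨t', ht', hat'⟩
    have hTbdd : BddBelow T := ⟨h, fun s hs => hs.1⟩
    have hTclosed : IsClosed T :=
      acont.preimage_isClosed_of_isClosed isClosed_Ici isClosed_Iic
    set t0 := sInf T with ht0def
    have ht0T : t0 ∈ T := hTclosed.csInf_mem hTne hTbdd
    have ht0h : h ≤ t0 := ht0T.1
    have ht0a : a t0 ≤ 0 := ht0T.2
    have hmin : ∀ s, h ≤ s → s < t0 → 0 < a s := by
      intro s hs hst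
      by_contra hc
      push_neg at hc
      exact absurd (csInf_le hTbdd ⟨hs, hc⟩) (not_le.2 hst)
    have ht0gt : h < t0 := by
      rcases eq_or_lt_of_le ht0h with heq | hgt
      · exfalso
        rw [← heq, hah] at ht0a
        linarith
      · exact hgt
    have hbt0 : 0 < b t0 := by
      rcases le_or_gt t0 (2*h) with hle | hgt
      · exact hbpos1 t0 ⟨ht0h, hle⟩
      · rw [hbeq t0 hgt.le]
        have := hmin (t0 - h) (by linarith) (by linarith)
        linarith
    have hder : HasDerivWithinAt a (1 - 2 * a t0 / b t0) (Set.Ioo h t0) t0 := by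
      rcases le_or_gt t0 (2*h) with hle | hgt
      · exact (aD1 t0 ⟨ht0gt, hle⟩).mono (fun x hx => ⟨hx.1.le, by linarith [hx.2]⟩)
      · exact (aD2 t0 hgt).1.hasDerivWithinAt
    have hm1 : 1 ≤ 1 - 2 * a t0 / b t0 := by
      have : 2 * a t0 / b t0 ≤ 0 := div_nonpos_iff.2 (Or.inr ⟨by linarith, hbt0.le⟩)
      linarith
    have hne : (𝓝[Set.Ioo h t0] t0).NeBot := by
      rw [← mem_closure_iff_nhdsWithin_neBot, closure_Ioo (ne_of_lt ht0gt)]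
      exact ⟨ht0gt.le, le_rfl⟩
    have hts : Tendsto (slope a t0) (𝓝[Set.Ioo h t0] t0) (𝓝 (1 - 2 * a t0 / b t0)) := by
      have h1 := hasDerivWithinAt_iff_tendsto_slope.1 hder
      rwa [Set.diff_singleton_eq_self (by simp : t0 ∉ Set.Ioo h t0)] at h1
    have hev : ∀ᶠ s in 𝓝[Set.Ioo h t0] t0, 0 < slope a t0 s :=
      hts.eventually_const_lt (by linarith)
    have hev2 : ∀ᶠ s in 𝓝[Set.Ioo h t0] t0, s ∈ Set.Ioo h t0 := eventually_mem_nhdsWithin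
    obtain ⟨s, hs1, hs2⟩ := (hev.and hev2).exists
    have has : 0 < a s := hmin s hs2.1.le hs2.2
    rw [slope_def_field] at hs1
    have : (a s - a t0) / (s - t0) < 0 :=
      div_neg_of_pos_of_neg (by linarith) (by linarith [hs2.2])
    linarith
  -- C1 facts
  have hCbex : ∃ Cb, ∀ s ∈ Set.Icc h (2*h), ‖a s - h‖ ≤ Cb :=
    isCompact_Icc.exists_bound_of_continuousOn
      ((acont.mono (fun x hx => hx.1)).sub continuousOn_const)
  obtain ⟨Cb, hCb⟩ := hCbex
  have hbdd : BddAbove (Set.range fun s => ⨆ _ : s ∈ Set.Icc h (2*h), |a s - h|) := by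
    refine ⟨max Cb 0, ?_⟩
    rintro y ⟨s, rfl⟩
    refine Real.iSup_le (fun hs => ?_) (le_max_right _ _)
    have := hCb s hs
    rw [Real.norm_eq_abs] at this
    exact this.trans (le_max_left _ _)
  have habs_win : ∀ s ∈ Set.Icc h (2*h), |a s - h| ≤ C1 := by
    intro s hs
    rw [hC1]
    have h1 : |a s - h| = ⨆ _ : s ∈ Set.Icc h (2*h), |a s - h| := (ciSup_pos (f := fun _ => |a s - h|) hs).symm
    rw [h1]
    exact le_ciSup hbdd s
  have hC1nn : 0 ≤ C1 := le_trans (abs_nonneg _) (habs_win h ⟨le_rfl, h2h.le⟩)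
  -- kappa facts
  have hDpos : 0 < 3*(C1/2 + h) := by linarith
  set κc := κ (C1/2) with hκcdef
  have hκceq : κc = max (3/4) (Real.exp (-h / (3*(C1/2 + h)))) := by rw [hκcdef, hκ]
  have hκ34 : (3:ℝ)/4 ≤ κc := by rw [hκceq]; exact le_max_left _ _
  have hκexp : Real.exp (-h / (3*(C1/2 + h))) ≤ κc := by rw [hκceq]; exact le_max_right _ _
  have hκpos : 0 < κc := lt_of_lt_of_le (by norm_num) hκ34
  have hκlt1 : κc < 1 := by
    rw [hκceq]
    refine max_lt (by norm_num) ?_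
    rw [Real.exp_lt_one_iff]
    have h1 : 0 < h / (3*(C1/2 + h)) := div_pos hh hDpos
    rw [neg_div]
    linarith
  set L := Real.log κc with hLdef
  have hLneg : L < 0 := Real.log_neg hκpos hκlt1
  have hLge : -h / (3*(C1/2 + h)) ≤ L := by
    have h1 := Real.log_le_log (Real.exp_pos _) hκexp
    rwa [Real.log_exp] at h1
  set q := Real.exp (-(L/2)) with hqdef
  have hq1 : 1 ≤ q := Real.one_le_exp (by linarith)
  have hqsq : q * q = Real.exp (-L) := by rw [hqdef, ← Real.exp_add]; ring_nf
  have hexpL : Real.exp (-L) ≤ 4/3 := by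
    have h1 : Real.exp L = κc := Real.exp_log hκpos
    rw [Real.exp_neg, h1]
    have hinv : 0 < κc⁻¹ := inv_pos.2 hκpos
    nlinarith [mul_inv_cancel₀ (ne_of_gt hκpos)]
  have hq32 : q ≤ 3/2 := by nlinarith [Real.exp_pos (-(L/2)), hqsq, hexpL]
  have hq0 : 0 < q := Real.exp_pos _
  -- b positivity beyond 2h and derivative rewrites
  have hbD : ∀ t, 2*h < t → 0 < b t := by
    intro t ht
    rw [hbeq t ht.le]
    linarith [hapos (t - h) (by linarith)]
  have hfa' : ∀ t, 2*h < t → HasDerivAt (fun s => a s - h)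
      ((a (t - h) - h - 2 * (a t - h)) / b t) t := by
    intro t ht
    have h1 : HasDerivAt (fun s => a s - h) (1 - 2 * a t / b t) t := ((aD2 t ht).1).sub_const h
    convert h1 using 1
    rw [hbeq t ht.le]
    have hb0 : a (t - h) + h ≠ 0 := ne_of_gt (by linarith [hapos (t - h) (by linarith)])
    field_simp
    ring
  have hfha' : ∀ t, 2*h < t → HasDerivAt (fun s => h - a s)
      ((h - a (t - h) - 2 * (h - a t)) / b t) t := by
    intro t ht
    have h1 : HasDerivAt (fun s => h - a s) (-(1 - 2 * a t / b t)) t := ((aD2 t ht).1).const_sub h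
    convert h1 using 1
    rw [hbeq t ht.le]
    have hb0 : a (t - h) + h ≠ 0 := ne_of_gt (by linarith [hapos (t - h) (by linarith)])
    field_simp
    ring
  -- Stage 1 : global bound |a t - h| <= C1
  have stage1 : ∀ ε, 0 < ε → ∀ t, h ≤ t → |a t - h| ≤ C1 + ε := by
    intro ε hε
    have hD1 : (0:ℝ) < C1 + ε + 2*h := by linarith
    have hup : ∀ t, h ≤ t → a t - h ≤ C1 * 1 + ε := by
      refine barrierAux h C1 (C1 + ε + 2*h) ε (fun s => a s - h) (fun _ => 1) (fun _ => 0) b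
        hh hD1 hε (acont.sub continuousOn_const) continuous_const
        (fun t _ => hasDerivAt_const t 1) ?_ ?_ ?_ ?_
      · intro t ht
        have := (abs_le.1 (habs_win t ht)).2
        simpa using this
      · intro t ht hprev
        refine ⟨hbD t ht, ?_⟩
        rw [hbeq t ht.le]
        have := hprev (t - h) (by linarith) (by linarith)
        simp only [mul_one] at this
        linarith
      · intro t _
        constructor
        · simp only [mul_one]; linarith
        · have hnum : C1 * (1:ℝ) + ε - 2*(C1 * 1 + ε) < 0 := by simp only [mul_one]; linarith
          have := div_neg_of_neg_of_pos hnum hD1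
          simpa using this
      · exact fun t ht => hfa' t ht
    have hdown : ∀ t, h ≤ t → h - a t ≤ C1 * 1 + ε := by
      refine barrierAux h C1 (C1 + ε + 2*h) ε (fun s => h - a s) (fun _ => 1) (fun _ => 0) b
        hh hD1 hε (continuousOn_const.sub acont) continuous_const
        (fun t _ => hasDerivAt_const t 1) ?_ ?_ ?_ ?_
      · intro t ht
        have := (abs_le.1 (habs_win t ht)).1
        simp only [mul_one]
        linarith
      · intro t ht _
        refine ⟨hbD t ht, ?_⟩
        rw [hbeq t ht.le]
        have := hup (t - h) (by linarith)
        simp only [mul_one] at this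
        linarith
      · intro t _
        constructor
        · simp only [mul_one]; linarith
        · have hnum : C1 * (1:ℝ) + ε - 2*(C1 * 1 + ε) < 0 := by simp only [mul_one]; linarith
          have := div_neg_of_neg_of_pos hnum hD1
          simpa using this
      · exact fun t ht => hfha' t ht
    intro t ht
    have h1 := hup t ht
    have h2 := hdown t ht
    simp only [mul_one] at h1 h2
    exact abs_le.2 ⟨by linarith, by linarith⟩
  have habs : ∀ t, h ≤ t → |a t - h| ≤ C1 :=
    fun t ht => le_of_forall_pos_le_add (fun ε hε => stage1 ε hε t ht)
  -- Stage 2 : exponential barrier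
  set g : ℝ → ℝ := fun t => Real.exp ((t - 3*h)/(2*h) * L) with hgdef
  have h2h0 : (2:ℝ)*h ≠ 0 := by positivity
  have hgpos : ∀ t, 0 < g t := fun t => Real.exp_pos _
  have hgcont : Continuous g := by
    simp only [hgdef]
    fun_prop
  have hgderiv : ∀ t, HasDerivAt g (g t * (L/(2*h))) t := by
    intro t
    have h1 : HasDerivAt (fun s : ℝ => (s - 3*h)/(2*h) * L) (1/(2*h) * L) t := by
      have := (((hasDerivAt_id t).sub_const (3*h)).div_const (2*h)).mul_const L
      simpa using this
    have h2 := h1.exp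
    simp only [hgdef]
    convert h2 using 1
    ring
  have hgshift : ∀ t, g (t - h) = g t * q := by
    intro t
    simp only [hgdef, hqdef]
    rw [← Real.exp_add]
    congr 1
    field_simp
    ring
  have hgge1 : ∀ t ∈ Set.Icc h (2*h), 1 ≤ g t := by
    intro t ht
    simp only [hgdef]
    refine Real.one_le_exp ?_
    have h1 : (t - 3*h)/(2*h) ≤ 0 :=
      div_nonpos_iff.2 (Or.inr ⟨by linarith [ht.2], by linarith⟩)
    nlinarith
  have hkey2 : ∀ ε, 0 < ε → ∀ t, 2*h < t →
      C1 * g (t - h) + ε - 2*(C1 * g t + ε) < 0 ∧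
      (C1 * g (t - h) + ε - 2*(C1 * g t + ε))/(3*(C1/2 + h)) < C1 * (g t * (L/(2*h))) := by
    intro ε hε t _
    have hgt0 : 0 < g t := hgpos t
    have hP : 0 ≤ C1 * g t := mul_nonneg hC1nn hgt0.le
    rw [hgshift t]
    constructor
    · nlinarith
    · have e1 : C1 * (g t * q) + ε - 2*(C1 * g t + ε) = (C1 * g t) * (q - 2) - ε := by ring
      rw [e1]
      have h1 : (C1 * g t) * (q - 2) - ε < (C1 * g t) * (-(1:ℝ)/2) := by nlinarith
      have h2 : ((C1 * g t) * (q - 2) - ε)/(3*(C1/2 + h)) <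
          ((C1 * g t) * (-(1:ℝ)/2))/(3*(C1/2 + h)) :=
        (div_lt_div_iff_of_pos_right hDpos).2 h1
      have h3 : (C1 * g t) * (-(1:ℝ)/2)/(3*(C1/2 + h)) ≤ (C1 * g t) * (L/(2*h)) := by
        have h4 : -h ≤ L * (3*(C1/2 + h)) := by
          have := (div_le_iff₀ hDpos).1 hLge
          linarith
        have hle : (-(1:ℝ)/2)/(3*(C1/2 + h)) ≤ L/(2*h) := by
          rw [div_le_div_iff₀ hDpos (by linarith : (0:ℝ) < 2*h)]
          nlinarith
        calc (C1 * g t) * (-(1:ℝ)/2)/(3*(C1/2 + h))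
            = (C1 * g t) * ((-(1:ℝ)/2)/(3*(C1/2 + h))) := by ring
          _ ≤ (C1 * g t) * (L/(2*h)) := mul_le_mul_of_nonneg_left hle hP
      calc ((C1 * g t) * (q - 2) - ε)/(3*(C1/2 + h))
          < (C1 * g t) * (-(1:ℝ)/2)/(3*(C1/2 + h)) := h2
        _ ≤ (C1 * g t) * (L/(2*h)) := h3
        _ = C1 * (g t * (L/(2*h))) := by ring
  have stage2 : ∀ ε, 0 < ε → ∀ t, h ≤ t → |a t - h| ≤ C1 * g t + ε := by
    intro ε hε
    have hinit2u : ∀ t ∈ Set.Icc h (2*h), a t - h ≤ C1 * g t := by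
      intro t ht
      have h1 := (abs_le.1 (habs_win t ht)).2
      calc a t - h ≤ C1 := h1
        _ ≤ C1 * g t := le_mul_of_one_le_right hC1nn (hgge1 t ht)
    have hinit2d : ∀ t ∈ Set.Icc h (2*h), h - a t ≤ C1 * g t := by
      intro t ht
      have h1 := (abs_le.1 (habs_win t ht)).1
      calc h - a t ≤ C1 := by linarith
        _ ≤ C1 * g t := le_mul_of_one_le_right hC1nn (hgge1 t ht)
    have hd2 : ∀ t, 2*h < t → 0 < b t ∧ b t ≤ 3*(C1/2 + h) := by
      intro t ht
      refine ⟨hbD t ht, ?_⟩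
      rw [hbeq t ht.le]
      have := (abs_le.1 (habs (t - h) (by linarith))).2
      linarith
    have hup : ∀ t, h ≤ t → a t - h ≤ C1 * g t + ε :=
      barrierAux h C1 (3*(C1/2 + h)) ε (fun s => a s - h) g (fun t => g t * (L/(2*h))) b
        hh hDpos hε (acont.sub continuousOn_const) hgcont
        (fun t _ => hgderiv t) hinit2u (fun t ht _ => hd2 t ht) (hkey2 ε hε)
        (fun t ht => hfa' t ht)
    have hdown : ∀ t, h ≤ t → h - a t ≤ C1 * g t + ε :=
      barrierAux h C1 (3*(C1/2 + h)) ε (fun s => h - a s) g (fun t => g t * (L/(2*h))) b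
        hh hDpos hε (continuousOn_const.sub acont) hgcont
        (fun t _ => hgderiv t) hinit2d (fun t ht _ => hd2 t ht) (hkey2 ε hε)
        (fun t ht => hfha' t ht)
    intro t ht
    exact abs_le.2 ⟨by linarith [hdown t ht], hup t ht⟩
  have stage2' : ∀ t, h ≤ t → |a t - h| ≤ C1 * g t :=
    fun t ht => le_of_forall_pos_le_add (fun ε hε => stage2 ε hε t ht)
  -- conclusion
  intro t ht4
  have hth : h ≤ t := by linarith
  constructor
  · rw [hbshift t hth, show a t + h - 2*h = a t - h by ring]
  · have hb := stage2' t hth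
    have heq : C1 * g t = C1 * κc ^ (-(3:ℝ)/2) * Real.exp (-μ * t) := by
      have h1 : κc ^ (-(3:ℝ)/2) = Real.exp (L * (-(3:ℝ)/2)) := by
        rw [Real.rpow_def_of_pos hκpos]
      have h2 : Real.exp (-μ * t) = Real.exp (1/(2*h) * L * t) := by
        congr 1
        rw [hμ]
        ring
      have h3 : g t = Real.exp (L * (-(3:ℝ)/2) + 1/(2*h) * L * t) := by
        simp only [hgdef]
        congr 1
        field_simp
        ring
      rw [h1, h2, h3, Real.exp_add]
      ring
    calc |a t - h| ≤ C1 * g t := hb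
      _ = C1 * κc ^ (-(3:ℝ)/2) * Real.exp (-μ * t) := heq
end
end

section
/- Existence and uniqueness of the fluid solution (Lemma 1, existence part). Let α = (a_h, u) be a DDE initial condition. Then there exist unique functions a, b defined for t ≥ h such that: b(t) = a_h + t − h + ∫_{t−h}^h u(s) ds for t ∈ [h,2h]; a is differentiable on (h,2h] with a′(t) = 1 − 2a(t)/b(t) and a(h) = a_h; and for all t > 2h, a and b are differentiable and satisfy a′(t) = 1 − 2a(t)/b(t) and b′(t) = 1 − 2a(t−h)/b(t−h). Moreover a(t) > 0 for all t ≥ h. -/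
open MeasureTheory Set

noncomputable section

open Filter Topology

/-- Existence of the solution of the linear ODE `A' = 1 - 2A/B` on `[c,d]` with
`A c = a0`, where `B` is continuous and positive on `[c,d]`. -/
lemma fluid_step_exists' {c d a0 : ℝ} (hcd : c ≤ d) {B : ℝ → ℝ}
    (hBc : ContinuousOn B (Icc c d)) (hBpos : ∀ t ∈ Icc c d, 0 < B t) (ha0 : 0 < a0) :
    ∃ A : ℝ → ℝ, Continuous A ∧ A c = a0 ∧ (∀ t ∈ Icc c d, 0 < A t) ∧
      ∀ t ∈ Icc c d, HasDerivAt A (1 - 2 * A t / B t) t := by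
  classical
  set C : ℝ → ℝ := fun t => B (max c (min d t)) with hC
  have hclamp : ∀ t, max c (min d t) ∈ Icc c d := fun t =>
    ⟨le_max_left _ _, max_le hcd (min_le_left _ _)⟩
  have hCeq : ∀ t ∈ Icc c d, C t = B t := by
    intro t ht
    simp only [hC]
    rw [min_eq_right ht.2, max_eq_right ht.1]
  have hCc : Continuous C := by
    have : Continuous fun t => max c (min d t) := continuous_const.max (continuous_const.min continuous_id)
    exact hBc.comp_continuous this hclamp
  have hCpos : ∀ t, 0 < C t := fun t => hBpos _ (hclamp t)
  have h2C : Continuous fun t => 2 / C t := continuous_const.div hCc fun t => (hCpos t).ne'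
  set φ : ℝ → ℝ := fun t => ∫ s in c..t, 2 / C s with hφdef
  have hφ : ∀ t, HasDerivAt φ (2 / C t) t := fun t => (h2C.integral_hasStrictDerivAt c t).hasDerivAt
  have hφc : Continuous φ := by
    have : Differentiable ℝ φ := fun t => (hφ t).differentiableAt
    exact this.continuous
  have heφ : Continuous fun t => Real.exp (φ t) := Real.continuous_exp.comp hφc
  set I : ℝ → ℝ := fun t => ∫ s in c..t, Real.exp (φ s) with hIdef
  have hI : ∀ t, HasDerivAt I (Real.exp (φ t)) t := fun t =>
    (heφ.integral_hasStrictDerivAt c t).hasDerivAt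
  set A : ℝ → ℝ := fun t => Real.exp (-φ t) * (a0 + I t) with hAdef
  have hφc0 : φ c = 0 := intervalIntegral.integral_same
  have hIc0 : I c = 0 := intervalIntegral.integral_same
  have hA : ∀ t, HasDerivAt A (Real.exp (-φ t) * -(2 / C t) * (a0 + I t)
      + Real.exp (-φ t) * Real.exp (φ t)) t := by
    intro t
    exact (((hφ t).neg).exp.mul ((hI t).const_add a0))
  have hAc : Continuous A :=
    (Real.continuous_exp.comp hφc.neg).mul
      (continuous_const.add (Differentiable.continuous fun t => (hI t).differentiableAt))
  refine ⟨A, hAc, ?_, ?_, ?_⟩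
  · simp [hAdef, hφc0, hIc0]
  · intro t ht
    have hInn : 0 ≤ I t := by
      apply intervalIntegral.integral_nonneg ht.1
      intro s _
      positivity
    have : 0 < a0 + I t := by linarith
    positivity
  · intro t ht
    have hBt := hBpos t ht
    have := hA t
    rw [hCeq t ht] at this
    convert this using 1
    have hee : Real.exp (-φ t) * Real.exp (φ t) = 1 := by
      rw [← Real.exp_add]; simp
    rw [hee]
    have hAt : A t = Real.exp (-φ t) * (a0 + I t) := rfl
    rw [hAt]
    field_simp
    ring

/-- Uniqueness for the linear ODE `f' = 1 - 2 f / B` on `[c,d]` with derivative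
hypotheses only on the open interval, given continuity up to the endpoints. -/
lemma fluid_step_unique {c d : ℝ} (hcd : c < d) {B f g : ℝ → ℝ}
    (hBc : ContinuousOn B (Icc c d)) (hBpos : ∀ t ∈ Icc c d, 0 < B t)
    (hf : ContinuousOn f (Icc c d))
    (hf' : ∀ t ∈ Ioo c d, HasDerivWithinAt f (1 - 2 * f t / B t) (Ici t) t)
    (hg : ContinuousOn g (Icc c d))
    (hg' : ∀ t ∈ Ioo c d, HasDerivWithinAt g (1 - 2 * g t / B t) (Ici t) t)
    (hini : f c = g c) : EqOn f g (Icc c d) := by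
  classical
  -- clamp B
  set C : ℝ → ℝ := fun t => B (max c (min d t)) with hC
  have hclamp : ∀ t, max c (min d t) ∈ Icc c d := fun t =>
    ⟨le_max_left _ _, max_le hcd.le (min_le_left _ _)⟩
  have hCeq : ∀ t ∈ Icc c d, C t = B t := by
    intro t ht
    simp only [hC]
    rw [min_eq_right ht.2, max_eq_right ht.1]
  have hCpos : ∀ t, 0 < C t := fun t => hBpos _ (hclamp t)
  -- a positive lower bound for B on the compact interval
  obtain ⟨tm, htm, hmin⟩ :=
    (isCompact_Icc (a := c) (b := d)).exists_isMinOn (nonempty_Icc.2 hcd.le) hBc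
  set ε : ℝ := B tm with hε
  have hεpos : 0 < ε := hBpos _ htm
  have hεle : ∀ t, ε ≤ C t := fun t => hmin (hclamp t)
  -- the vector field and its Lipschitz property
  set v : ℝ → ℝ → ℝ := fun t x => 1 - 2 * x / C t with hv
  set K : NNReal := ⟨2 / ε, by positivity⟩ with hK
  have hlip : ∀ t, LipschitzWith K (v t) := by
    intro t
    apply LipschitzWith.of_dist_le_mul
    intro x y
    have hCt := hCpos t
    have : v t x - v t y = (2 / C t) * (y - x) := by
      simp only [hv]
      field_simp
      ring
    rw [Real.dist_eq, Real.dist_eq, this, abs_mul, abs_sub_comm y x]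
    have h1 : |2 / C t| = 2 / C t := abs_of_pos (by positivity)
    rw [h1]
    have h2 : 2 / C t ≤ 2 / ε := by
      have := hεle t
      gcongr
    have h3 : (K : ℝ) = 2 / ε := rfl
    rw [h3]
    exact mul_le_mul_of_nonneg_right h2 (abs_nonneg _)
  -- main estimate for every starting point c' in (c, t)
  intro t ht
  rcases eq_or_lt_of_le ht.1 with rfl | hct
  · exact hini
  have key : ∀ c' ∈ Ioo c t, dist (f t) (g t) ≤ dist (f c') (g c') * Real.exp (K * (d - c)) := by
    intro c' hc'
    have hc'd : c' ∈ Ioo c d := ⟨hc'.1, lt_of_lt_of_le hc'.2 ht.2⟩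
    have hIcc : Icc c' d ⊆ Icc c d := Icc_subset_Icc hc'd.1.le le_rfl
    have hIco : Ico c' d ⊆ Ioo c d := fun s hs => ⟨lt_of_lt_of_le hc'd.1 hs.1, hs.2⟩
    have hder : ∀ s ∈ Ico c' d, HasDerivWithinAt f (v s (f s)) (Ici s) s := by
      intro s hs
      show HasDerivWithinAt f (1 - 2 * f s / C s) (Ici s) s
      rw [hCeq s ⟨(hIco hs).1.le, (hIco hs).2.le⟩]
      exact hf' s (hIco hs)
    have hderg : ∀ s ∈ Ico c' d, HasDerivWithinAt g (v s (g s)) (Ici s) s := by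
      intro s hs
      show HasDerivWithinAt g (1 - 2 * g s / C s) (Ici s) s
      rw [hCeq s ⟨(hIco hs).1.le, (hIco hs).2.le⟩]
      exact hg' s (hIco hs)
    have hest := dist_le_of_trajectories_ODE (v := v) (K := K) hlip
      (hf.mono hIcc) hder (hg.mono hIcc) hderg (le_refl (dist (f c') (g c')))
      t ⟨hc'.2.le, ht.2⟩
    calc dist (f t) (g t) ≤ dist (f c') (g c') * Real.exp (K * (t - c')) := hest
      _ ≤ dist (f c') (g c') * Real.exp (K * (d - c)) := by
          apply mul_le_mul_of_nonneg_left _ dist_nonneg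
          apply Real.exp_le_exp.2
          apply mul_le_mul_of_nonneg_left _ K.2
          linarith [ht.2, hc'.1]
  -- take the limit c' → c⁺
  have hne : (𝓝[Ioo c t] c).NeBot := by
    rw [← mem_closure_iff_nhdsWithin_neBot, closure_Ioo hct.ne]
    exact ⟨le_refl c, hct.le⟩
  have htend : Tendsto (fun c' => dist (f c') (g c') * Real.exp (K * (d - c)))
      (𝓝[Ioo c t] c) (𝓝 (dist (f c) (g c) * Real.exp (K * (d - c)))) := by
    apply Tendsto.mul_const
    have hsub : Ioo c t ⊆ Icc c d := fun s hs => ⟨hs.1.le, le_trans hs.2.le ht.2⟩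
    have h1 : Tendsto f (𝓝[Ioo c t] c) (𝓝 (f c)) :=
      (hf.continuousWithinAt (left_mem_Icc.2 hcd.le)).mono_left (nhdsWithin_mono _ hsub)
    have h2 : Tendsto g (𝓝[Ioo c t] c) (𝓝 (g c)) :=
      (hg.continuousWithinAt (left_mem_Icc.2 hcd.le)).mono_left (nhdsWithin_mono _ hsub)
    exact h1.dist h2
  rw [hini, dist_self, zero_mul] at htend
  have hle : dist (f t) (g t) ≤ 0 :=
    ge_of_tendsto htend (eventually_nhdsWithin_of_forall fun c' hc' => key c' hc')
  have := dist_nonneg (x := f t) (y := g t)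
  have : dist (f t) (g t) = 0 := le_antisymm hle this
  exact dist_eq_zero.mp this

attribute [local instance] Classical.propDecidable

/-- One step of the construction: the solution of `A' = 1 - 2A/B`, `A c = a0` on `[c,d]`. -/
def fluidStep (c d a0 : ℝ) (B : ℝ → ℝ) : ℝ → ℝ :=
  if H : c ≤ d ∧ ContinuousOn B (Icc c d) ∧ (∀ t ∈ Icc c d, 0 < B t) ∧ 0 < a0 then
    Classical.choose (fluid_step_exists' H.1 H.2.1 H.2.2.1 H.2.2.2)
  else fun _ => a0

lemma fluidStep_spec {c d a0 : ℝ} {B : ℝ → ℝ} (h1 : c ≤ d)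
    (h2 : ContinuousOn B (Icc c d)) (h3 : ∀ t ∈ Icc c d, 0 < B t) (h4 : 0 < a0) :
    Continuous (fluidStep c d a0 B) ∧ fluidStep c d a0 B c = a0 ∧
      (∀ t ∈ Icc c d, 0 < fluidStep c d a0 B t) ∧
      ∀ t ∈ Icc c d, HasDerivAt (fluidStep c d a0 B) (1 - 2 * fluidStep c d a0 B t / B t) t := by
  have H : c ≤ d ∧ ContinuousOn B (Icc c d) ∧ (∀ t ∈ Icc c d, 0 < B t) ∧ 0 < a0 :=
    ⟨h1, h2, h3, h4⟩
  rw [fluidStep, dif_pos H]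
  exact Classical.choose_spec (fluid_step_exists' H.1 H.2.1 H.2.2.1 H.2.2.2)

/-- grid points -/
def cpt (h : ℝ) (k : ℕ) : ℝ := h + k * h

lemma cpt_zero (h : ℝ) : cpt h 0 = h := by simp [cpt]
lemma cpt_one (h : ℝ) : cpt h 1 = 2 * h := by simp [cpt]; ring
lemma cpt_succ (h : ℝ) (k : ℕ) : cpt h (k + 1) = cpt h k + h := by
  simp [cpt]; push_cast; ring
lemma cpt_mono {h : ℝ} (hh : 0 < h) {j k : ℕ} (hjk : j ≤ k) : cpt h j ≤ cpt h k := by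
  simp only [cpt]
  have : (j : ℝ) ≤ (k : ℝ) := by exact_mod_cast hjk
  nlinarith
lemma cpt_lt {h : ℝ} (hh : 0 < h) (k : ℕ) : cpt h k < cpt h (k + 1) := by
  rw [cpt_succ]; linarith
lemma cpt_ge {h : ℝ} (hh : 0 < h) (k : ℕ) : h ≤ cpt h k := by
  simpa [cpt_zero] using cpt_mono hh (Nat.zero_le k)

/-- the driving function `B` on `[h, 2h]` -/
def fluidB0 (h ah : ℝ) (u : ℝ → ℝ) : ℝ → ℝ := fun t => ah + t - h + ∫ s in (t-h)..h, u s

/-- the sequence of solutions on consecutive intervals -/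
def fluidSeq (h ah : ℝ) (u : ℝ → ℝ) : ℕ → (ℝ → ℝ)
  | 0 => fluidStep (cpt h 0) (cpt h 1) ah (fluidB0 h ah u)
  | (k+1) => fluidStep (cpt h (k+1)) (cpt h (k+2)) (fluidSeq h ah u k (cpt h (k+1)))
      (fun t => fluidSeq h ah u k (t - h) + h)

/-- the driving function on each interval -/
def fluidBB (h ah : ℝ) (u : ℝ → ℝ) : ℕ → (ℝ → ℝ)
  | 0 => fluidB0 h ah u
  | (k+1) => fun t => fluidSeq h ah u k (t - h) + h

section

variable {h ah : ℝ} {u : ℝ → ℝ} (hh : 0 < h) (hα : IsDDEInit h ah u)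

lemma fluidB0_contOn (hh : 0 < h) (hα : IsDDEInit h ah u) :
    ContinuousOn (fluidB0 h ah u) (Icc (cpt h 0) (cpt h 1)) := by
  rw [cpt_zero, cpt_one]
  have hint : IntegrableOn u (uIcc 0 h) volume := by
    rw [uIcc_of_le hh.le]; exact hα.2.1
  have hprim : ContinuousOn (fun x => ∫ s in x..h, u s) (uIcc 0 h) :=
    intervalIntegral.continuousOn_primitive_interval_left hint
  rw [uIcc_of_le hh.le] at hprim
  have hmaps : MapsTo (fun t => t - h) (Icc h (2*h)) (Icc 0 h) := by
    intro t ht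
    simp only [mem_Icc] at ht ⊢
    constructor <;> linarith [ht.1, ht.2]
  have h2 : ContinuousOn (fun t => ∫ s in (t-h)..h, u s) (Icc h (2*h)) :=
    hprim.comp ((continuous_id.sub continuous_const).continuousOn) hmaps
  exact ((continuousOn_const.add continuousOn_id).sub continuousOn_const).add h2

lemma fluidB0_pos (hh : 0 < h) (hα : IsDDEInit h ah u) :
    ∀ t ∈ Icc (cpt h 0) (cpt h 1), 0 < fluidB0 h ah u t := by
  rw [cpt_zero, cpt_one]
  intro t ht
  have hint : (0:ℝ) ≤ ∫ s in (t-h)..h, u s := by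
    apply intervalIntegral.integral_nonneg (by linarith [ht.2])
    intro s hs
    exact (hα.2.2 s ⟨by linarith [hs.1, ht.1], hs.2⟩).1
  have := hα.1
  simp only [fluidB0]
  have : 0 < ah + t - h := by linarith [ht.1]
  linarith

/-- the main invariant, proven by induction -/
lemma fluidSeq_inv (hh : 0 < h) (hα : IsDDEInit h ah u) : ∀ k : ℕ,
    Continuous (fluidSeq h ah u k) ∧
    (∀ t ∈ Icc (cpt h k) (cpt h (k+1)), 0 < fluidSeq h ah u k t) ∧
    (∀ t ∈ Icc (cpt h k) (cpt h (k+1)),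
      HasDerivAt (fluidSeq h ah u k)
        (1 - 2 * fluidSeq h ah u k t / fluidBB h ah u k t) t) ∧
    (ContinuousOn (fluidBB h ah u k) (Icc (cpt h k) (cpt h (k+1))) ∧
      ∀ t ∈ Icc (cpt h k) (cpt h (k+1)), 0 < fluidBB h ah u k t) := by
  intro k
  induction k with
  | zero =>
    have hcd : cpt h 0 ≤ cpt h 1 := (cpt_lt hh 0).le
    have hBc := fluidB0_contOn hh hα
    have hBp := fluidB0_pos hh hα
    obtain ⟨s1, s2, s3, s4⟩ := fluidStep_spec hcd hBc hBp hα.1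
    exact ⟨s1, s3, s4, hBc, hBp⟩
  | succ k ih =>
    obtain ⟨ihc, ihp, ihd, _⟩ := ih
    have hmaps : ∀ t ∈ Icc (cpt h (k+1)) (cpt h (k+2)),
        t - h ∈ Icc (cpt h k) (cpt h (k+1)) := by
      intro t ht
      rw [cpt_succ h k] at ht ⊢
      rw [cpt_succ h (k+1), cpt_succ h k] at ht
      constructor <;> [linarith [ht.1]; linarith [ht.2]]
    have hcd : cpt h (k+1) ≤ cpt h (k+2) := (cpt_lt hh (k+1)).le
    have hBc : ContinuousOn (fun t => fluidSeq h ah u k (t - h) + h)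
        (Icc (cpt h (k+1)) (cpt h (k+2))) :=
      (((ihc.comp (continuous_id.sub continuous_const)).add continuous_const)).continuousOn
    have hBp : ∀ t ∈ Icc (cpt h (k+1)) (cpt h (k+2)),
        0 < fluidSeq h ah u k (t - h) + h := by
      intro t ht
      have := ihp _ (hmaps t ht)
      linarith
    have ha0 : 0 < fluidSeq h ah u k (cpt h (k+1)) :=
      ihp _ ⟨(cpt_lt hh k).le, le_refl _⟩
    obtain ⟨s1, s2, s3, s4⟩ := fluidStep_spec hcd hBc hBp ha0
    exact ⟨s1, s3, s4, hBc, hBp⟩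

lemma fluidSeq_init (hh : 0 < h) (hα : IsDDEInit h ah u) :
    fluidSeq h ah u 0 h = ah := by
  have h0 : fluidSeq h ah u 0 (cpt h 0) = ah :=
    (fluidStep_spec (cpt_lt hh 0).le (fluidB0_contOn hh hα) (fluidB0_pos hh hα) hα.1).2.1
  simpa [cpt_zero] using h0

lemma fluidSeq_match (hh : 0 < h) (hα : IsDDEInit h ah u) (k : ℕ) :
    fluidSeq h ah u (k+1) (cpt h (k+1)) = fluidSeq h ah u k (cpt h (k+1)) := by
  obtain ⟨ihc, ihp, ihd, _⟩ := fluidSeq_inv hh hα k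
  have hmaps : ∀ t ∈ Icc (cpt h (k+1)) (cpt h (k+2)),
      t - h ∈ Icc (cpt h k) (cpt h (k+1)) := by
    intro t ht
    rw [cpt_succ h k] at ht ⊢
    rw [cpt_succ h (k+1), cpt_succ h k] at ht
    constructor <;> [linarith [ht.1]; linarith [ht.2]]
  have hcd : cpt h (k+1) ≤ cpt h (k+2) := (cpt_lt hh (k+1)).le
  have hBc : ContinuousOn (fun t => fluidSeq h ah u k (t - h) + h)
      (Icc (cpt h (k+1)) (cpt h (k+2))) :=
    (((ihc.comp (continuous_id.sub continuous_const)).add continuous_const)).continuousOn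
  have hBp : ∀ t ∈ Icc (cpt h (k+1)) (cpt h (k+2)),
      0 < fluidSeq h ah u k (t - h) + h := by
    intro t ht
    have := ihp _ (hmaps t ht)
    linarith
  have ha0 : 0 < fluidSeq h ah u k (cpt h (k+1)) :=
    ihp _ ⟨(cpt_lt hh k).le, le_refl _⟩
  exact (fluidStep_spec hcd hBc hBp ha0).2.1

end

section
variable {h ah : ℝ} {u : ℝ → ℝ}

/-- the glued solution -/
def fluidA (h ah : ℝ) (u : ℝ → ℝ) : ℝ → ℝ := fun t => fluidSeq h ah u (⌊(t - h)/h⌋₊) t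

/-- the glued `b` function -/
def fluidb (h ah : ℝ) (u : ℝ → ℝ) : ℝ → ℝ := fun t =>
  if t ≤ 2*h then fluidB0 h ah u t else fluidA h ah u (t - h) + h

lemma mem_Ico_cpt (hh : 0 < h) {t : ℝ} (ht : h ≤ t) :
    t ∈ Ico (cpt h ⌊(t - h)/h⌋₊) (cpt h (⌊(t - h)/h⌋₊ + 1)) := by
  set r := (t - h)/h with hr
  have hr0 : 0 ≤ r := div_nonneg (by linarith) hh.le
  have h1 : (⌊r⌋₊ : ℝ) ≤ r := Nat.floor_le hr0
  have h2 : r < ⌊r⌋₊ + 1 := Nat.lt_floor_add_one r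
  have ht' : t = h + r * h := by rw [hr, div_mul_cancel₀ _ hh.ne']; ring
  constructor
  · simp only [cpt]
    nlinarith
  · simp only [cpt]
    push_cast
    nlinarith

lemma exists_Ico_cpt (hh : 0 < h) {t : ℝ} (ht : h ≤ t) :
    ∃ k, t ∈ Ico (cpt h k) (cpt h (k+1)) :=
  ⟨_, mem_Ico_cpt hh ht⟩

lemma exists_Ioc_cpt (hh : 0 < h) {t : ℝ} (ht : h < t) :
    ∃ k, t ∈ Ioc (cpt h k) (cpt h (k+1)) := by
  obtain ⟨k, hk⟩ := exists_Ico_cpt hh ht.le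
  rcases eq_or_lt_of_le hk.1 with heq | hlt
  · match k, heq with
    | 0, heq => exact absurd heq.symm (by rw [cpt_zero]; exact ht.ne')
    | (j+1), heq =>
      exact ⟨j, by rw [← heq]; exact cpt_lt hh j, by rw [← heq]⟩
  · exact ⟨k, hlt, hk.2.le⟩

lemma fluidA_agree (hh : 0 < h) (hα : IsDDEInit h ah u) (k : ℕ) :
    ∀ t ∈ Icc (cpt h k) (cpt h (k+1)), fluidA h ah u t = fluidSeq h ah u k t := by
  intro t ht
  have hr0 : 0 ≤ (t - h)/h := div_nonneg (by linarith [le_trans (cpt_ge hh k) ht.1]) hh.le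
  rcases eq_or_lt_of_le ht.2 with heq | hlt
  · -- t is the right endpoint
    have hfl : ⌊(t - h)/h⌋₊ = k + 1 := by
      have : (t - h)/h = ((k+1 : ℕ) : ℝ) := by
        rw [heq]
        simp only [cpt]
        push_cast
        field_simp
        ring
      rw [this, Nat.floor_natCast]
    show fluidSeq h ah u _ t = _
    rw [hfl, heq]
    exact fluidSeq_match hh hα k
  · have hfl : ⌊(t - h)/h⌋₊ = k := by
      rw [Nat.floor_eq_iff hr0]
      have e1 : cpt h k = h + (k:ℝ)*h := rfl
      have e2 : cpt h (k+1) = h + ((k+1:ℕ):ℝ)*h := rfl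
      constructor
      · rw [le_div_iff₀ hh]
        have h1 := ht.1
        rw [e1] at h1
        linarith
      · rw [div_lt_iff₀ hh]
        have h2 := hlt
        rw [e2] at h2
        push_cast at h2
        linarith
    show fluidSeq h ah u _ t = _
    rw [hfl]

lemma fluidb_val (hh : 0 < h) (hα : IsDDEInit h ah u) (k : ℕ) :
    ∀ t ∈ Icc (cpt h k) (cpt h (k+1)), fluidb h ah u t = fluidBB h ah u k t := by
  intro t ht
  match k with
  | 0 =>
    have h2 : t ≤ 2*h := by
      have := ht.2
      rw [cpt_one] at this
      exact this
    simp only [fluidb, if_pos h2, fluidBB]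
  | (k+1) =>
    have h2h : 2*h ≤ t := by
      have := le_trans (cpt_mono hh (by omega : 1 ≤ k+1)) ht.1
      rwa [cpt_one] at this
    rcases eq_or_lt_of_le h2h with heq | hlt
    · -- t = 2h forces k = 0
      have hk0 : k = 0 := by
        have h1 := ht.1
        have e1 : cpt h (k+1) = h + ((k+1:ℕ):ℝ)*h := rfl
        rw [e1, ← heq] at h1
        push_cast at h1
        have hk : (k:ℝ) ≤ 0 := by nlinarith
        have hk' : (k:ℝ) = 0 := le_antisymm hk (by positivity)
        exact_mod_cast hk'
      subst hk0
      have hbt : fluidb h ah u (2*h) = ah + h := by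
        show (if (2*h:ℝ) ≤ 2*h then fluidB0 h ah u (2*h) else fluidA h ah u (2*h-h) + h) = ah + h
        rw [if_pos (le_refl (2*h))]
        show ah + 2*h - h + ∫ s in (2*h-h)..h, u s = ah + h
        rw [show 2*h - h = h by ring, intervalIntegral.integral_same]
        ring
      have hBBt : fluidBB h ah u 1 (2*h) = ah + h := by
        show fluidSeq h ah u 0 (2*h - h) + h = ah + h
        rw [show 2*h - h = h by ring, fluidSeq_init hh hα]
      rw [← heq, hbt]
      exact hBBt.symm
    · have hmem : t - h ∈ Icc (cpt h k) (cpt h (k+1)) := by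
        have e1 : cpt h (k+1) = cpt h k + h := cpt_succ h k
        have e2 : cpt h (k+2) = cpt h (k+1) + h := cpt_succ h (k+1)
        constructor
        · have := ht.1; rw [e1] at this; linarith
        · have := ht.2; rw [e2] at this; linarith
      have : fluidb h ah u t = fluidA h ah u (t - h) + h := by
        simp only [fluidb, if_neg (not_le.2 hlt)]
      rw [this, fluidA_agree hh hα k _ hmem]
      rfl

lemma fluidA_derivR (hh : 0 < h) (hα : IsDDEInit h ah u) {t : ℝ} (ht : h ≤ t) :
    HasDerivWithinAt (fluidA h ah u)
      (1 - 2 * fluidA h ah u t / fluidb h ah u t) (Ici t) t := by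
  obtain ⟨k, hk⟩ := exists_Ico_cpt hh ht
  obtain ⟨_, _, hd, _⟩ := fluidSeq_inv hh hα k
  have hIcc : t ∈ Icc (cpt h k) (cpt h (k+1)) := ⟨hk.1, hk.2.le⟩
  have hder := (hd t hIcc).hasDerivWithinAt (s := Ici t)
  have hmem : Ico t (cpt h (k+1)) ∈ 𝓝[Ici t] t :=
    mem_nhdsWithin.2 ⟨Iio (cpt h (k+1)), isOpen_Iio, hk.2,
      fun s hs => ⟨hs.2, hs.1⟩⟩
  have heq : fluidA h ah u =ᶠ[𝓝[Ici t] t] fluidSeq h ah u k := by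
    filter_upwards [hmem] with s hs
    exact fluidA_agree hh hα k s ⟨le_trans hk.1 hs.1, hs.2.le⟩
  have hval : fluidA h ah u t = fluidSeq h ah u k t := fluidA_agree hh hα k t hIcc
  have := hder.congr_of_eventuallyEq heq hval
  rwa [hval, fluidb_val hh hα k t hIcc]

lemma fluidA_derivL (hh : 0 < h) (hα : IsDDEInit h ah u) {t : ℝ} (ht : h < t) :
    HasDerivWithinAt (fluidA h ah u)
      (1 - 2 * fluidA h ah u t / fluidb h ah u t) (Iic t) t := by
  obtain ⟨k, hk⟩ := exists_Ioc_cpt hh ht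
  obtain ⟨_, _, hd, _⟩ := fluidSeq_inv hh hα k
  have hIcc : t ∈ Icc (cpt h k) (cpt h (k+1)) := ⟨hk.1.le, hk.2⟩
  have hder := (hd t hIcc).hasDerivWithinAt (s := Iic t)
  have hmem : Ioc (cpt h k) t ∈ 𝓝[Iic t] t :=
    mem_nhdsWithin.2 ⟨Ioi (cpt h k), isOpen_Ioi, hk.1,
      fun s hs => ⟨hs.1, hs.2⟩⟩
  have heq : fluidA h ah u =ᶠ[𝓝[Iic t] t] fluidSeq h ah u k := by
    filter_upwards [hmem] with s hs
    exact fluidA_agree hh hα k s ⟨hs.1.le, le_trans hs.2 hk.2⟩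
  have hval : fluidA h ah u t = fluidSeq h ah u k t := fluidA_agree hh hα k t hIcc
  have := hder.congr_of_eventuallyEq heq hval
  rwa [hval, fluidb_val hh hα k t hIcc]

lemma fluidA_deriv (hh : 0 < h) (hα : IsDDEInit h ah u) {t : ℝ} (ht : h < t) :
    HasDerivAt (fluidA h ah u) (1 - 2 * fluidA h ah u t / fluidb h ah u t) t := by
  have := (fluidA_derivL hh hα ht).union (fluidA_derivR hh hα ht.le)
  rwa [Iic_union_Ici, hasDerivWithinAt_univ] at this

lemma fluidA_pos (hh : 0 < h) (hα : IsDDEInit h ah u) {t : ℝ} (ht : h ≤ t) :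
    0 < fluidA h ah u t := by
  obtain ⟨k, hk⟩ := exists_Ico_cpt hh ht
  obtain ⟨_, hp, _, _⟩ := fluidSeq_inv hh hα k
  have hIcc : t ∈ Icc (cpt h k) (cpt h (k+1)) := ⟨hk.1, hk.2.le⟩
  rw [fluidA_agree hh hα k t hIcc]
  exact hp t hIcc

lemma fluidA_init (hh : 0 < h) (hα : IsDDEInit h ah u) : fluidA h ah u h = ah := by
  have hIcc : h ∈ Icc (cpt h 0) (cpt h 1) := by
    rw [cpt_zero, cpt_one]
    exact ⟨le_refl h, by linarith⟩
  rw [fluidA_agree hh hα 0 h hIcc, fluidSeq_init hh hα]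

lemma fluidA_contOn (hh : 0 < h) (hα : IsDDEInit h ah u) :
    ContinuousOn (fluidA h ah u) (Ici h) := by
  intro t ht
  rcases eq_or_lt_of_le (show h ≤ t from ht) with heq | hlt
  · subst heq
    exact (fluidA_derivR hh hα le_rfl).continuousWithinAt
  · exact ((fluidA_deriv hh hα hlt).continuousAt).continuousWithinAt

lemma fluidb_formula :
    ∀ t ∈ Icc h (2*h), fluidb h ah u t = ah + t - h + ∫ s in (t-h)..h, u s := by
  intro t ht
  show (if t ≤ 2*h then fluidB0 h ah u t else fluidA h ah u (t-h) + h) = _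
  rw [if_pos ht.2]
  rfl

lemma fluidb_shift (hh : 0 < h) (hα : IsDDEInit h ah u) :
    ∀ t, 2*h ≤ t → fluidb h ah u t = fluidA h ah u (t - h) + h := by
  intro t ht
  rcases eq_or_lt_of_le ht with heq | hlt
  · rw [← heq]
    show (if (2*h:ℝ) ≤ 2*h then fluidB0 h ah u (2*h) else _) = _
    rw [if_pos le_rfl]
    show ah + 2*h - h + ∫ s in (2*h-h)..h, u s = fluidA h ah u (2*h - h) + h
    rw [show 2*h - h = h by ring, intervalIntegral.integral_same, fluidA_init hh hα]
    ring
  · show (if t ≤ 2*h then fluidB0 h ah u t else fluidA h ah u (t-h) + h) = _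
    rw [if_neg (not_le.2 hlt)]

lemma fluidb_pos (hh : 0 < h) (hα : IsDDEInit h ah u) {t : ℝ} (ht : h ≤ t) :
    0 < fluidb h ah u t := by
  obtain ⟨k, hk⟩ := exists_Ico_cpt hh ht
  have hIcc : t ∈ Icc (cpt h k) (cpt h (k+1)) := ⟨hk.1, hk.2.le⟩
  rw [fluidb_val hh hα k t hIcc]
  exact (fluidSeq_inv hh hα k).2.2.2.2 t hIcc

lemma fluidb_contOn (hh : 0 < h) (hα : IsDDEInit h ah u) :
    ContinuousOn (fluidb h ah u) (Ici h) := by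
  have hf1 : ContinuousOn (fluidB0 h ah u) (Icc h (2*h)) := by
    have := fluidB0_contOn hh hα
    rwa [cpt_zero, cpt_one] at this
  have hf2 : ContinuousOn (fun t => fluidA h ah u (t - h) + h) (Ici (2*h)) := by
    apply ContinuousOn.add _ continuousOn_const
    apply (fluidA_contOn hh hα).comp ((continuous_id.sub continuous_const).continuousOn)
    intro s hs
    simp only [mem_Ici, id_eq] at hs ⊢
    show h ≤ s - h
    linarith
  have hEq1 : EqOn (fluidb h ah u) (fluidB0 h ah u) (Icc h (2*h)) := by
    intro s hs
    show (if s ≤ 2*h then fluidB0 h ah u s else _) = _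
    rw [if_pos hs.2]
  have hEq2 : EqOn (fluidb h ah u) (fun t => fluidA h ah u (t - h) + h) (Ici (2*h)) :=
    fun s hs => fluidb_shift hh hα s hs
  intro t ht
  rcases lt_trichotomy t (2*h) with hlt | heq | hgt
  · rw [← continuousWithinAt_inter (Iio_mem_nhds hlt)]
    have hsub : Ici h ∩ Iio (2*h) ⊆ Icc h (2*h) := fun s hs => ⟨hs.1, hs.2.le⟩
    exact ((hf1 t ⟨ht, hlt.le⟩).mono hsub).congr (fun s hs => hEq1 (hsub hs))
      (hEq1 ⟨ht, hlt.le⟩)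
  · have c1 : ContinuousWithinAt (fluidb h ah u) (Icc h (2*h)) t :=
      (hf1 t ⟨ht, heq.le⟩).congr (fun s hs => hEq1 hs) (hEq1 ⟨ht, heq.le⟩)
    have c2 : ContinuousWithinAt (fluidb h ah u) (Ici (2*h)) t :=
      (hf2 t (by rw [heq]; exact self_mem_Ici)).congr (fun s hs => hEq2 hs)
        (hEq2 (by rw [heq]; exact self_mem_Ici))
    exact (c1.union c2).mono (fun s hs => by
      rcases le_or_gt s (2*h) with h'|h'
      · exact Or.inl ⟨hs, h'⟩
      · exact Or.inr h'.le)
  · have hA : ContinuousAt (fluidA h ah u) (t - h) :=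
      (fluidA_deriv hh hα (by linarith : h < t - h)).continuousAt
    have hsub : ContinuousAt (fun s : ℝ => s - h) t := (continuous_sub_right h).continuousAt
    have hc : ContinuousAt (fun s => fluidA h ah u (s - h) + h) t := by
      exact (ContinuousAt.comp (x := t) hA hsub).add continuousAt_const
    have heq' : (fun s => fluidA h ah u (s - h) + h) =ᶠ[𝓝 t] fluidb h ah u := by
      filter_upwards [Ioi_mem_nhds hgt] with s hs
      exact (fluidb_shift hh hα s (le_of_lt hs)).symm
    exact (hc.congr heq').continuousWithinAt

lemma fluidb_deriv (hh : 0 < h) (hα : IsDDEInit h ah u) {t : ℝ} (ht : 2*h < t) :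
    HasDerivAt (fluidb h ah u)
      (1 - 2 * fluidA h ah u (t - h) / fluidb h ah u (t - h)) t := by
  have hth : h < t - h := by linarith
  have hA := fluidA_deriv hh hα hth
  have h1 : HasDerivAt (fun s => fluidA h ah u (s - h))
      (1 - 2 * fluidA h ah u (t - h) / fluidb h ah u (t - h)) t := by
    have := HasDerivAt.comp t hA ((hasDerivAt_id t).sub_const h)
    simpa [Function.comp_def] using this
  have h2 := h1.add_const h
  apply h2.congr_of_eventuallyEq
  filter_upwards [Ioi_mem_nhds ht] with s hs
  exact fluidb_shift hh hα s (le_of_lt hs)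

end

lemma const_of_derivR_zero {f : ℝ → ℝ} {x y : ℝ} (hxy : x < y)
    (hfc : ContinuousOn f (Icc x y))
    (hf' : ∀ t ∈ Ioo x y, HasDerivWithinAt f 0 (Ici t) t) :
    ∀ t ∈ Icc x y, f t = f y := by
  have key : ∀ t ∈ Ioc x y, f t = f y := by
    intro t ht
    rcases eq_or_lt_of_le ht.2 with heq | hlt
    · rw [heq]
    · have hder : ∀ s ∈ Ico t y, HasDerivWithinAt f 0 (Ici s) s := fun s hs =>
        hf' s ⟨lt_of_lt_of_le ht.1 hs.1, hs.2⟩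
      have := constant_of_has_deriv_right_zero
        (hfc.mono (Icc_subset_Icc ht.1.le le_rfl)) hder
      exact (this y ⟨hlt.le, le_rfl⟩).symm
  intro t ht
  rcases eq_or_lt_of_le ht.1 with heq | hlt
  · subst heq
    have hne : (𝓝[Ioo x y] x).NeBot := by
      rw [← mem_closure_iff_nhdsWithin_neBot, closure_Ioo hxy.ne]
      exact ⟨le_refl x, hxy.le⟩
    have htend : Filter.Tendsto f (𝓝[Ioo x y] x) (𝓝 (f x)) :=
      (hfc.continuousWithinAt (left_mem_Icc.2 hxy.le)).mono_left
        (nhdsWithin_mono _ Ioo_subset_Icc_self)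
    have heqev : ∀ᶠ s in 𝓝[Ioo x y] x, f s = f y :=
      eventually_nhdsWithin_of_forall (fun s hs => key s ⟨hs.1, hs.2.le⟩)
    exact tendsto_nhds_unique ((Filter.tendsto_congr' heqev).1 htend) tendsto_const_nhds
  · exact key t ⟨hlt, ht.2⟩

/-- **Lemma 1 (existence and uniqueness of the fluid solution).**
For every DDE initial condition `α = (a_h, u)` there exist unique functions `(a, b)`
defined for `t ≥ h` which form the associated fluid solution; moreover `a(t) > 0`
for all `t ≥ h`. -/
theorem fluid_solution_exists_unique
    (h ah : ℝ) (u : ℝ → ℝ) (hh : 0 < h) (hα : IsDDEInit h ah u) :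
    ∃ a b : ℝ → ℝ, IsFluidSolution h ah u a b ∧
      (∀ t : ℝ, h ≤ t → 0 < a t) ∧
      ∀ a' b' : ℝ → ℝ, IsFluidSolution h ah u a' b' →
        ∀ t : ℝ, h ≤ t → a' t = a t ∧ b' t = b t := by
  classical
  refine ⟨fluidA h ah u, fluidb h ah u,
    ⟨fluidA_contOn hh hα, fluidb_contOn hh hα, fluidb_formula, fluidA_init hh hα, ?_, ?_⟩,
    fun t ht => fluidA_pos hh hα ht, ?_⟩
  · intro t ht
    exact (fluidA_deriv hh hα ht.1).hasDerivWithinAt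
  · intro t ht
    exact ⟨fluidA_deriv hh hα (by linarith), fluidb_deriv hh hα ht⟩
  -- uniqueness
  intro a' b' hsol
  obtain ⟨ha'c, hb'c, hb'f, ha'h, hd1, hd2⟩ := hsol
  -- step 1: b' = fluidb on [h, 2h]
  have hb'eq1 : ∀ t ∈ Icc h (2*h), b' t = fluidb h ah u t := by
    intro t ht
    rw [hb'f t ht, fluidb_formula t ht]
  -- step 2: the shift identity b'(t) = a'(t-h) + h for t ≥ 2h
  have hDcont : ContinuousOn (fun t => b' t - a' (t - h)) (Ici (2*h)) := by
    apply ContinuousOn.sub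
    · exact hb'c.mono (fun s hs => le_trans (by linarith : h ≤ 2*h) hs)
    · apply ha'c.comp ((continuous_id.sub continuous_const).continuousOn)
      intro s hs
      simp only [mem_Ici, id_eq] at hs ⊢
      show h ≤ s - h
      linarith
  have hD01 : ∀ t ∈ Ioo (2*h) (3*h),
      HasDerivWithinAt (fun t => b' t - a' (t - h)) 0 (Ici t) t := by
    intro t ht
    have hb'd := ((hd2 t ht.1).2).hasDerivWithinAt (s := Ici t)
    have hth : t - h ∈ Ioc h (2*h) := ⟨by linarith [ht.1], by linarith [ht.2]⟩
    have ha'dw : HasDerivWithinAt a' (1 - 2 * a' (t-h) / b' (t-h)) (Ici (t-h)) (t-h) := by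
      apply (hd1 (t-h) hth).mono_of_mem_nhdsWithin
      apply mem_nhdsWithin.2 ⟨Iio (2*h), isOpen_Iio, by simp only [mem_Iio]; linarith [ht.2], ?_⟩
      intro s hs
      exact ⟨le_trans hth.1.le hs.2, le_of_lt hs.1⟩
    have hcomp : HasDerivWithinAt (fun s => a' (s - h))
        ((1 - 2 * a' (t-h) / b' (t-h)) * 1) (Ici t) t :=
      HasDerivWithinAt.comp t ha'dw (((hasDerivAt_id t).sub_const h).hasDerivWithinAt)
        (fun s hs => by
          simp only [mem_Ici] at hs ⊢
          show t - h ≤ s - h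
          linarith)
    have := hb'd.sub hcomp
    have e0 : (1 - 2 * a' (t-h) / b' (t-h) - (1 - 2 * a' (t-h) / b' (t-h)) * 1) = 0 := by ring
    rw [e0] at this
    exact this
  have hD02 : ∀ y, 3*h < y → ∀ t ∈ Ioo (3*h) y,
      HasDerivWithinAt (fun t => b' t - a' (t - h)) 0 (Ici t) t := by
    intro y _ t ht
    have hb'd := ((hd2 t (by linarith [ht.1])).2).hasDerivWithinAt (s := Ici t)
    have ha'd := (hd2 (t-h) (by linarith [ht.1])).1
    have hcomp : HasDerivWithinAt (fun s => a' (s - h))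
        ((1 - 2 * a' (t-h) / b' (t-h)) * 1) (Ici t) t :=
      HasDerivWithinAt.comp t ha'd.hasDerivWithinAt
        (((hasDerivAt_id t).sub_const h).hasDerivWithinAt)
        (fun s hs => by
          simp only [mem_Ici] at hs ⊢
          show t - h ≤ s - h
          linarith)
    have := hb'd.sub hcomp
    have e0 : (1 - 2 * a' (t-h) / b' (t-h) - (1 - 2 * a' (t-h) / b' (t-h)) * 1) = 0 := by ring
    rw [e0] at this
    exact this
  have hc1 : ∀ t ∈ Icc (2*h) (3*h), (fun t => b' t - a' (t - h)) t
      = (fun t => b' t - a' (t - h)) (3*h) :=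
    const_of_derivR_zero (by linarith) (hDcont.mono (fun s hs => hs.1)) hD01
  have hc2 : ∀ y, 3*h < y → (fun t => b' t - a' (t - h)) (3*h)
      = (fun t => b' t - a' (t - h)) y := by
    intro y hy
    exact const_of_derivR_zero hy
      (hDcont.mono (fun s hs => le_trans (by linarith : 2*h ≤ 3*h) hs.1))
      (hD02 y hy) (3*h) ⟨le_rfl, hy.le⟩
  have hD2h : b' (2*h) - a' (2*h - h) = h := by
    rw [hb'f (2*h) ⟨by linarith, le_rfl⟩, show 2*h - h = h by ring, ha'h,
      intervalIntegral.integral_same]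
    ring
  have hshift : ∀ t, 2*h ≤ t → b' t = a' (t - h) + h := by
    intro t ht
    have hval : b' t - a' (t - h) = h := by
      rcases le_or_gt t (3*h) with h3 | h3
      · have e1 := hc1 t ⟨ht, h3⟩
        have e2 := hc1 (2*h) ⟨le_rfl, by linarith⟩
        simp only at e1 e2
        rw [e1, ← e2, hD2h]
      · have e1 := hc2 t h3
        have e2 := hc1 (2*h) ⟨le_rfl, by linarith⟩
        simp only at e1 e2
        rw [← e1, ← e2, hD2h]
    linarith
  -- step 3: induction over the intervals
  have hind : ∀ k : ℕ, EqOn a' (fluidA h ah u) (Icc h (cpt h (k+1))) := by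
    intro k
    induction k with
    | zero =>
      have h1 : EqOn a' (fluidA h ah u) (Icc h (2*h)) := by
        refine fluid_step_unique (by linarith : h < 2*h)
          ((fluidb_contOn hh hα).mono (fun s hs => hs.1))
          (fun t ht => fluidb_pos hh hα ht.1)
          (ha'c.mono (fun s hs => hs.1)) ?_
          ((fluidA_contOn hh hα).mono (fun s hs => hs.1))
          (fun t ht => (fluidA_deriv hh hα ht.1).hasDerivWithinAt)
          (by rw [ha'h, fluidA_init hh hα])
        intro t ht
        have hder := hd1 t ⟨ht.1, ht.2.le⟩
        rw [hb'eq1 t ⟨ht.1.le, ht.2.le⟩] at hder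
        apply hder.mono_of_mem_nhdsWithin
        apply mem_nhdsWithin.2 ⟨Iio (2*h), isOpen_Iio, by simp only [mem_Iio]; exact ht.2, ?_⟩
        intro s hs
        exact ⟨le_trans ht.1.le hs.2, le_of_lt hs.1⟩
      rw [cpt_one]
      exact h1
    | succ k ih =>
      have hc2h : 2*h ≤ cpt h (k+1) := by
        rw [← cpt_one]
        exact cpt_mono hh (by omega)
      have hcd : cpt h (k+1) < cpt h (k+2) := cpt_lt hh (k+1)
      have hbJ : ∀ t ∈ Icc (cpt h (k+1)) (cpt h (k+2)), b' t = fluidb h ah u t := by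
        intro t ht
        have ht2 : 2*h ≤ t := le_trans hc2h ht.1
        rw [hshift t ht2, fluidb_shift hh hα t ht2]
        congr 1
        apply ih
        constructor
        · linarith
        · have e2 : cpt h (k+2) = cpt h (k+1) + h := cpt_succ h (k+1)
          have := ht.2
          rw [e2] at this
          linarith
      have hIciSub : Icc (cpt h (k+1)) (cpt h (k+2)) ⊆ Ici h := fun s hs =>
        le_trans (le_trans (by linarith : h ≤ 2*h) hc2h) hs.1
      have h1 : EqOn a' (fluidA h ah u) (Icc (cpt h (k+1)) (cpt h (k+2))) := by
        refine fluid_step_unique hcd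
          ((fluidb_contOn hh hα).mono hIciSub)
          (fun t ht => fluidb_pos hh hα (hIciSub ht))
          (ha'c.mono hIciSub) ?_
          ((fluidA_contOn hh hα).mono hIciSub)
          (fun t ht => (fluidA_deriv hh hα
            (lt_of_lt_of_le (lt_of_lt_of_le (by linarith : h < 2*h) hc2h) ht.1.le)).hasDerivWithinAt)
          (ih ⟨cpt_ge hh (k+1), le_rfl⟩)
        intro t ht
        have ht2h : 2*h < t := lt_of_le_of_lt hc2h ht.1
        have hder := (hd2 t ht2h).1
        rw [hbJ t ⟨ht.1.le, ht.2.le⟩] at hder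
        exact hder.hasDerivWithinAt
      intro s hs
      rcases le_or_gt s (cpt h (k+1)) with hsc | hsc
      · exact ih ⟨hs.1, hsc⟩
      · exact h1 ⟨hsc.le, hs.2⟩
  -- finish
  intro t ht
  obtain ⟨k, hk⟩ := exists_Ico_cpt hh ht
  have hat : a' t = fluidA h ah u t := hind k ⟨ht, hk.2.le⟩
  refine ⟨hat, ?_⟩
  rcases le_or_gt t (2*h) with h2 | h2
  · exact hb'eq1 t ⟨ht, h2⟩
  · rw [hshift t h2.le, fluidb_shift hh hα t h2.le]
    have hth : a' (t - h) = fluidA h ah u (t - h) := by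
      apply hind k
      constructor
      · linarith
      · linarith [hk.2.le]
    rw [hth]
end
end

section
/- Delay structure of the fluid solution (Lemma 1, property 2). Let α be a DDE initial condition with associated fluid solution (a,b). Then b(t) = h + a(t − h) for all t ≥ 2h. -/
open MeasureTheory Set

noncomputable section

/-- **Lemma 1, property 2 (delay structure of the fluid solution).**
If `(a, b)` is the fluid solution associated to a DDE initial condition, then
`b(t) = h + a(t - h)` for all `t ≥ 2h`. -/
theorem fluid_solution_delay_structure
    (h ah : ℝ) (u : ℝ → ℝ) (hh : 0 < h) (hα : IsDDEInit h ah u)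
    (a b : ℝ → ℝ) (hfluid : IsFluidSolution h ah u a b) :
    ∀ t : ℝ, 2*h ≤ t → b t = h + a (t - h) := by
  obtain ⟨ha_cont, hb_cont, hbform, hah, haode, hdde⟩ := hfluid
  set φ : ℝ → ℝ := fun t => b t - (h + a (t - h)) with hφdef
  -- continuity of φ on Ici (2h)
  have hsub : Set.Ici (2*h) ⊆ Set.Ici h := fun x hx => by
    simp only [Set.mem_Ici] at *; linarith
  have hg_cont : ContinuousOn (fun t => h + a (t - h)) (Set.Ici (2*h)) := by
    apply continuousOn_const.add
    apply ha_cont.comp (continuousOn_id.sub continuousOn_const)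
    intro x hx
    simp only [Set.mem_Ici, id_eq, Pi.sub_apply] at *; linarith
  have hφ_cont : ContinuousOn φ (Set.Ici (2*h)) :=
    (hb_cont.mono hsub).sub hg_cont
  -- φ (2h) = 0
  have hφ2h : φ (2*h) = 0 := by
    have hb2h : b (2*h) = ah + h := by
      have := hbform (2*h) ⟨by linarith, le_refl _⟩
      have h1 : 2*h - h = h := by ring
      rw [h1, intervalIntegral.integral_same] at this
      linarith
    have ha2h : a (2*h - h) = ah := by
      have h1 : 2*h - h = h := by ring
      rw [h1, hah]
    simp only [hφdef, hb2h, ha2h]; ring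
  -- derivative of φ is 0 for x in (2h, 3h)
  have hderiv1 : ∀ x ∈ Set.Ioo (2*h) (3*h), HasDerivAt φ 0 x := by
    intro x hx
    obtain ⟨hx1, hx2⟩ := hx
    have haD : HasDerivAt a (1 - 2 * a (x - h) / b (x - h)) (x - h) := by
      have hmem : x - h ∈ Set.Ioc h (2*h) := ⟨by linarith, by linarith⟩
      have := haode (x - h) hmem
      refine this.hasDerivAt ?_
      exact Icc_mem_nhds (by linarith) (by linarith)
    have hbD := (hdde x hx1).2
    have hgD : HasDerivAt (fun t => h + a (t - h))
        (1 - 2 * a (x - h) / b (x - h)) x := by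
      have hc : HasDerivAt (fun t : ℝ => t - h) 1 x :=
        (hasDerivAt_id x).sub_const h
      have := (haD.comp x hc)
      simpa using this.const_add h
    have := hbD.sub hgD
    rw [sub_self] at this; exact this
  -- derivative of φ is 0 for x > 3h
  have hderiv2 : ∀ x : ℝ, 3*h < x → HasDerivAt φ 0 x := by
    intro x hx
    have haD : HasDerivAt a (1 - 2 * a (x - h) / b (x - h)) (x - h) := by
      have h1 : x - h - h = x - 2*h := by ring
      have := (hdde (x - h) (by linarith)).1
      convert this using 2
    have hbD := (hdde x (by linarith)).2
    have hgD : HasDerivAt (fun t => h + a (t - h))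
        (1 - 2 * a (x - h) / b (x - h)) x := by
      have hc : HasDerivAt (fun t : ℝ => t - h) 1 x :=
        (hasDerivAt_id x).sub_const h
      have := (haD.comp x hc)
      simpa using this.const_add h
    have := hbD.sub hgD
    rw [sub_self] at this; exact this
  -- general constancy principle
  have hconst : ∀ c d : ℝ, c ≤ d → (∀ x ∈ Set.Ioo c d, HasDerivAt φ 0 x) →
      Set.Icc c d ⊆ Set.Ici (2*h) → ∀ t ∈ Set.Icc c d, φ t = φ c := by
    intro c d hcd hder hsub' t ht
    have hcont : ContinuousOn φ (Set.Icc c d) := hφ_cont.mono hsub'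
    have hdiff : DifferentiableOn ℝ φ (interior (Set.Icc c d)) := by
      rw [interior_Icc]
      exact fun x hx => (hder x hx).differentiableAt.differentiableWithinAt
    have hd0 : ∀ x ∈ interior (Set.Icc c d), deriv φ x = 0 := by
      rw [interior_Icc]
      exact fun x hx => (hder x hx).deriv
    have hmono : MonotoneOn φ (Set.Icc c d) :=
      monotoneOn_of_deriv_nonneg (convex_Icc c d) hcont hdiff
        (fun x hx => by rw [hd0 x hx])
    have hanti : AntitoneOn φ (Set.Icc c d) :=
      antitoneOn_of_deriv_nonpos (convex_Icc c d) hcont hdiff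
        (fun x hx => by rw [hd0 x hx])
    have hc_mem : c ∈ Set.Icc c d := ⟨le_refl _, hcd⟩
    exact le_antisymm (hanti hc_mem ht ht.1) (hmono hc_mem ht ht.1)
  -- φ = 0 on [2h, 3h]
  have hφ_mid : ∀ t ∈ Set.Icc (2*h) (3*h), φ t = 0 := by
    intro t ht
    rw [hconst (2*h) (3*h) (by linarith) hderiv1
      (fun x hx => hx.1) t ht, hφ2h]
  -- conclude
  intro t ht
  have key : φ t = 0 := by
    rcases le_or_gt t (3*h) with h3 | h3
    · exact hφ_mid t ⟨ht, h3⟩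
    · have h3h : φ (3*h) = 0 := hφ_mid (3*h) ⟨by linarith, le_refl _⟩
      have := hconst (3*h) t (by linarith)
        (fun x hx => hderiv2 x hx.1)
        (fun x hx => by simp only [Set.mem_Ici]; linarith [hx.1]) t
        ⟨by linarith, le_refl _⟩
      rw [this, h3h]
  simp only [hφdef] at key
  linarith
end
end

section
/- Integral identity for the fluid solution (Lemma 1, property 4). Let α be a DDE initial condition with associated fluid solution (a,b). Then for all t ≥ 2h: b(t) − a(t) = ∫_{t−h}^t 2 a(s)/b(s) ds. -/
open MeasureTheory Set Topology Filter

noncomputable section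

/-- If `g` is continuous on `[L,T]` and has right derivative `0` on the open interval,
then `g T = g L`. -/
lemma aux_const_of_deriv_zero (g : ℝ → ℝ) (L T : ℝ) (hLT : L < T)
    (hc : ContinuousOn g (Icc L T))
    (hd : ∀ x ∈ Ioo L T, HasDerivWithinAt g 0 (Ici x) x) : g T = g L := by
  have hconst : ∀ s ∈ Ioo L T, g T = g s := by
    intro s hs
    have := constant_of_has_deriv_right_zero
      (hc.mono (Icc_subset_Icc hs.1.le le_rfl))
      (fun x hx => hd x ⟨lt_of_lt_of_le hs.1 hx.1, hx.2⟩)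
      T ⟨hs.2.le, le_rfl⟩
    exact this
  have hne : (𝓝[Ioo L T] L).NeBot := by
    rw [nhdsWithin_Ioo_eq_nhdsGT hLT]
    infer_instance
  have h1 : Filter.Tendsto g (𝓝[Ioo L T] L) (𝓝 (g L)) := by
    have := (hc.continuousWithinAt ⟨le_rfl, hLT.le⟩)
    exact this.mono_left (nhdsWithin_mono _ Ioo_subset_Icc_self)
  have h2 : Filter.Tendsto g (𝓝[Ioo L T] L) (𝓝 (g T)) := by
    refine Filter.Tendsto.congr' ?_ tendsto_const_nhds
    filter_upwards [self_mem_nhdsWithin] with s hs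
    exact hconst s hs
  exact tendsto_nhds_unique h2 h1

/-- Positivity of `a` on `[h, ∞)`. -/
lemma aux_a_pos (h ah : ℝ) (a b : ℝ → ℝ) (hh : 0 < h) (hah : 0 < ah)
    (hca : ContinuousOn a (Ici h)) (haH : a h = ah)
    (hd1 : ∀ t ∈ Ioc h (2*h), HasDerivWithinAt a (1 - 2 * a t / b t) (Icc h (2*h)) t)
    (hd2 : ∀ t, 2*h < t → HasDerivAt a (1 - 2 * a t / b t) t) :
    ∀ t, h ≤ t → 0 < a t := by
  by_contra hcon
  push_neg at hcon
  obtain ⟨T, hT, haT⟩ := hcon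
  -- an auxiliary everywhere-continuous version of a
  set f : ℝ → ℝ := fun t => a (max t h) with hf_def
  have hfc : Continuous f := by
    have : ContinuousOn f univ := hca.comp ((continuous_id.max continuous_const).continuousOn)
      (fun x _ => mem_Ici.mpr (le_max_right _ _))
    exact continuousOn_univ.mp this
  have hfa : ∀ t, h ≤ t → f t = a t := fun t ht => by simp [hf_def, max_eq_left ht]
  -- the zero set
  set S : Set ℝ := Icc h T ∩ f ⁻¹' {0} with hS_def
  have hSclosed : IsClosed S := isClosed_Icc.inter (isClosed_singleton.preimage hfc)
  have hTne : h < T := by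
    rcases lt_or_eq_of_le hT with h' | h'
    · exact h'
    · exfalso; rw [← h', haH] at haT; linarith
  have hSne : S.Nonempty := by
    have := intermediate_value_Icc' hT (hca.mono (Icc_subset_Ici_self))
    have h0 : (0:ℝ) ∈ Icc (a T) (a h) := ⟨haT, by rw [haH]; exact hah.le⟩
    obtain ⟨z, hz, hz0⟩ := this h0
    exact ⟨z, hz, by simp [hfa z hz.1, hz0]⟩
  have hSbdd : BddBelow S := ⟨h, fun x hx => hx.1.1⟩
  set t0 : ℝ := sInf S with ht0_def
  have ht0S : t0 ∈ S := hSclosed.csInf_mem hSne hSbdd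
  have ht0h : h ≤ t0 := ht0S.1.1
  have hat0 : a t0 = 0 := by
    have := ht0S.2
    simp only [mem_preimage, mem_singleton_iff] at this
    rwa [hfa t0 ht0h] at this
  have ht0h' : h < t0 := by
    rcases lt_or_eq_of_le ht0h with h' | h'
    · exact h'
    · exfalso; rw [← h', haH] at hat0; linarith
  -- a is positive before t0
  have hpos : ∀ y ∈ Ico h t0, 0 < a y := by
    intro y hy
    by_contra hya
    push_neg at hya
    rcases lt_or_eq_of_le hya with hlt | heq
    · obtain ⟨z, hz, hz0⟩ := intermediate_value_Icc' hy.1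
        (hca.mono (Icc_subset_Ici_self))
        (⟨hlt.le, by rw [haH]; exact hah.le⟩ : (0:ℝ) ∈ Icc (a y) (a h))
      have hzS : z ∈ S := ⟨⟨hz.1, le_trans hz.2 (le_trans hy.2.le ht0S.1.2)⟩,
        by simp [hfa z hz.1, hz0]⟩
      have := csInf_le hSbdd hzS
      have : t0 ≤ z := this
      linarith [hz.2, hy.2]
    · have hyS : y ∈ S := ⟨⟨hy.1, le_trans hy.2.le ht0S.1.2⟩, by simp [hfa y hy.1, ← heq]⟩
      have := csInf_le hSbdd hyS
      linarith [hy.2]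
  -- the slope tends to 1 at t0 from the left
  have htend : Filter.Tendsto (slope a t0) (𝓝[Ioo h t0] t0) (𝓝 1) := by
    rcases le_or_gt t0 (2*h) with hc2 | hc2
    · have hd := hd1 t0 ⟨ht0h', hc2⟩
      rw [hat0] at hd
      have hd' : HasDerivWithinAt a 1 (Icc h (2*h)) t0 := by simpa using hd
      have := hasDerivWithinAt_iff_tendsto_slope.1 hd'
      refine this.mono_left (nhdsWithin_mono _ ?_)
      intro y hy
      exact ⟨⟨hy.1.le, lt_of_lt_of_le hy.2 hc2 |>.le⟩, ne_of_lt hy.2⟩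
    · have hd := hd2 t0 hc2
      rw [hat0] at hd
      have hd' : HasDerivAt a 1 t0 := by simpa using hd
      have := hasDerivAt_iff_tendsto_slope.1 hd'
      refine this.mono_left (nhdsWithin_mono _ ?_)
      intro y hy
      exact ne_of_lt hy.2
  rw [nhdsWithin_Ioo_eq_nhdsLT ht0h'] at htend
  have hev : ∀ᶠ y in 𝓝[<] t0, slope a t0 y ≤ 0 := by
    filter_upwards [Ioo_mem_nhdsLT_of_mem (⟨ht0h', le_rfl⟩ : t0 ∈ Ioc h t0)] with y hy
    rw [slope_def_field]
    have h1 : 0 < a y := hpos y ⟨hy.1.le, hy.2⟩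
    have h2 : y - t0 < 0 := by linarith [hy.2]
    rw [hat0]
    have : (a y - 0) / (y - t0) ≤ 0 :=
      div_nonpos_of_nonneg_of_nonpos (by linarith) h2.le
    simpa using this
  have h10 : (1:ℝ) ≤ 0 := le_of_tendsto htend hev
  linarith

/-- **Lemma 1, property 4 (integral identity for the fluid solution).**
If `(a, b)` is the fluid solution associated to a DDE initial condition, then
`b(t) - a(t) = ∫_{t-h}^t 2 a(s)/b(s) ds` for all `t ≥ 2h`. -/
theorem fluid_solution_integral_identity
    (h ah : ℝ) (u : ℝ → ℝ) (hh : 0 < h) (hα : IsDDEInit h ah u)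
    (a b : ℝ → ℝ) (hfluid : IsFluidSolution h ah u a b) :
    ∀ t : ℝ, 2*h ≤ t → b t - a t = ∫ s in (t-h)..t, 2 * a s / b s := by
  obtain ⟨hah, huint, hu⟩ := hα
  obtain ⟨hca, hcb, hb, haH, hd1, hd2⟩ := hfluid
  -- positivity of a
  have hapos : ∀ t, h ≤ t → 0 < a t :=
    aux_a_pos h ah a b hh hah hca haH hd1 (fun t ht => (hd2 t ht).1)
  -- b(2h) = ah + h
  have hb2h : b (2*h) = ah + h := by
    have := hb (2*h) ⟨by linarith, le_rfl⟩
    rw [this, show 2*h - h = h by ring, intervalIntegral.integral_same]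
    ring
  -- key identity b(t) = a(t-h) + h for t ≥ 2h
  set g : ℝ → ℝ := fun y => b y - a (y - h) with hg_def
  have hg2h : g (2*h) = h := by
    simp only [hg_def, hb2h, show 2*h - h = h by ring, haH]
    ring
  have hgcont : ContinuousOn g (Ici (2*h)) := by
    apply ContinuousOn.sub (hcb.mono (Ici_subset_Ici.mpr (by linarith)))
    exact hca.comp ((continuous_id.sub continuous_const).continuousOn)
      (fun y hy => by simp only [mem_Ici] at hy ⊢; linarith)
  -- right derivative of g is zero on (2h, 3h)
  have hdg1 : ∀ x ∈ Ioo (2*h) (3*h), HasDerivWithinAt g 0 (Ici x) x := by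
    intro x hx
    have hbx : HasDerivWithinAt b (1 - 2 * a (x - h) / b (x - h)) (Ici x) x :=
      ((hd2 x hx.1).2).hasDerivWithinAt
    have hax : HasDerivWithinAt a (1 - 2 * a (x - h) / b (x - h)) (Icc h (2*h)) (x - h) :=
      hd1 (x - h) ⟨by linarith [hx.1], by linarith [hx.2]⟩
    have hmem : Icc h (2*h) ∈ 𝓝[Ici (x - h)] (x - h) :=
      Icc_mem_nhdsGE_of_mem ⟨by linarith [hx.1], by linarith [hx.2]⟩
    have hax' : HasDerivWithinAt a (1 - 2 * a (x - h) / b (x - h)) (Ici (x - h)) (x - h) :=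
      hax.mono_of_mem_nhdsWithin hmem
    have hinner : HasDerivWithinAt (fun y => y - h) 1 (Ici x) x := by
      simpa using ((hasDerivAt_id x).sub_const h).hasDerivWithinAt
    have hmaps : MapsTo (fun y => y - h) (Ici x) (Ici (x - h)) := by
      intro y hy; simp only [mem_Ici] at hy ⊢; linarith
    have hcomp : HasDerivWithinAt (fun y => a (y - h))
        ((1 - 2 * a (x - h) / b (x - h)) * 1) (Ici x) x :=
      HasDerivWithinAt.comp x hax' hinner hmaps
    have := hbx.sub hcomp
    have heq : (1 - 2 * a (x - h) / b (x - h)) - (1 - 2 * a (x - h) / b (x - h)) * 1 = 0 := by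
      ring
    rw [heq] at this
    exact this
  -- right derivative of g is zero on (3h, ∞)
  have hdg2 : ∀ x, 3*h < x → HasDerivWithinAt g 0 (Ici x) x := by
    intro x hx
    have hbx : HasDerivAt b (1 - 2 * a (x - h) / b (x - h)) x := (hd2 x (by linarith)).2
    have hax : HasDerivAt a (1 - 2 * a (x - h) / b (x - h)) (x - h) :=
      (hd2 (x - h) (by linarith)).1
    have hinner : HasDerivAt (fun y => y - h) 1 x := by
      simpa using (hasDerivAt_id x).sub_const h
    have hcomp : HasDerivAt (fun y => a (y - h))
        ((1 - 2 * a (x - h) / b (x - h)) * 1) x :=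
      HasDerivAt.comp x hax hinner
    have := (hbx.sub hcomp)
    have heq : (1 - 2 * a (x - h) / b (x - h)) - (1 - 2 * a (x - h) / b (x - h)) * 1 = 0 := by
      ring
    rw [heq] at this
    exact this.hasDerivWithinAt
  -- g is constant equal to h on [2h, ∞)
  have hbkey : ∀ t, 2*h ≤ t → b t = a (t - h) + h := by
    have hg3h : g (3*h) = h := by
      have := aux_const_of_deriv_zero g (2*h) (3*h) (by linarith)
        (hgcont.mono (Icc_subset_Ici_self))
        (fun x hx => hdg1 x hx)
      rw [this, hg2h]
    intro t ht
    have hgt : g t = h := by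
      rcases eq_or_lt_of_le ht with h' | h'
      · rw [← h']; exact hg2h
      · rcases le_or_gt t (3*h) with h3 | h3
        · have := aux_const_of_deriv_zero g (2*h) t h'
            (hgcont.mono (Icc_subset_Ici_self))
            (fun x hx => hdg1 x ⟨hx.1, lt_of_lt_of_le hx.2 h3⟩)
          rw [this, hg2h]
        · have := aux_const_of_deriv_zero g (3*h) t h3
            (hgcont.mono (Icc_subset_Icc_left (by linarith) |>.trans Icc_subset_Ici_self))
            (fun x hx => hdg2 x hx.1)
          rw [this, hg3h]
    have : b t - a (t - h) = h := hgt
    linarith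
  -- positivity of b on [h, ∞)
  have hbpos : ∀ t, h ≤ t → 0 < b t := by
    intro t ht
    rcases le_or_gt t (2*h) with h2 | h2
    · rw [hb t ⟨ht, h2⟩]
      have hint : (0:ℝ) ≤ ∫ s in (t-h)..h, u s := by
        apply intervalIntegral.integral_nonneg (by linarith)
        intro s hs
        exact (hu s ⟨by linarith [hs.1], hs.2⟩).1
      linarith
    · rw [hbkey t h2.le]
      linarith [hapos (t - h) (by linarith)]
  -- main computation
  intro t ht
  have hth : h ≤ t - h := by linarith
  set f' : ℝ → ℝ := fun s => 1 - 2 * a s / b s with hf'_def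
  have hcf' : ContinuousOn f' (Ici h) := by
    apply ContinuousOn.sub continuousOn_const
    exact ((continuousOn_const.mul hca).div hcb (fun s hs => (hbpos s hs).ne'))
  have hint : ∀ p q : ℝ, h ≤ p → h ≤ q → IntervalIntegrable f' volume p q := by
    intro p q hp hq
    apply ContinuousOn.intervalIntegrable
    apply hcf'.mono
    intro s hs
    rcases le_total p q with h' | h'
    · rw [uIcc_of_le h'] at hs; exact le_trans hp hs.1
    · rw [uIcc_of_ge h'] at hs; exact le_trans hq hs.1
  -- FTC on subintervals of [h, 2h]
  have hftc1 : ∀ p q : ℝ, h ≤ p → p ≤ q → q ≤ 2*h →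
      ∫ s in p..q, f' s = a q - a p := by
    intro p q hp hpq hq
    apply intervalIntegral.integral_eq_sub_of_hasDeriv_right_of_le hpq
      (hca.mono (fun s hs => le_trans hp hs.1))
    · intro x hx
      have hax : HasDerivWithinAt a (1 - 2 * a x / b x) (Icc h (2*h)) x :=
        hd1 x ⟨lt_of_le_of_lt hp hx.1, le_trans hx.2.le hq⟩
      apply hax.mono_of_mem_nhdsWithin
      rw [mem_nhdsWithin]
      refine ⟨Iio (2*h), isOpen_Iio, lt_of_lt_of_le hx.2 hq, ?_⟩
      intro y hy
      exact ⟨le_trans hp (le_trans hx.1.le hy.2.le), hy.1.le⟩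
    · exact hint p q hp (by linarith)
  -- FTC on subintervals of [2h, ∞)
  have hftc2 : ∀ p q : ℝ, 2*h ≤ p → p ≤ q →
      ∫ s in p..q, f' s = a q - a p := by
    intro p q hp hpq
    apply intervalIntegral.integral_eq_sub_of_hasDeriv_right_of_le hpq
      (hca.mono (fun s hs => le_trans (by linarith) hs.1))
    · intro x hx
      exact ((hd2 x (lt_of_le_of_lt hp hx.1)).1).hasDerivWithinAt
    · exact hint p q (by linarith) (by linarith)
  have hftc : ∫ s in (t-h)..t, f' s = a t - a (t - h) := by
    rcases le_or_gt t (3*h) with h3 | h3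
    · have e1 := hftc1 (t-h) (2*h) hth (by linarith) le_rfl
      have e2 := hftc2 (2*h) t le_rfl ht
      have := intervalIntegral.integral_add_adjacent_intervals
        (hint (t-h) (2*h) hth (by linarith)) (hint (2*h) t (by linarith) (by linarith))
      rw [e1, e2] at this
      rw [← this]; ring
    · exact hftc2 (t-h) t (by linarith) (by linarith)
  have hcongr : ∫ s in (t-h)..t, 2 * a s / b s = ∫ s in (t-h)..t, (1 - f' s) := by
    apply intervalIntegral.integral_congr
    intro s _
    simp only [hf'_def]
    ring
  have hsplit : ∫ s in (t-h)..t, (1 - f' s) = (∫ s in (t-h)..t, (1:ℝ)) - ∫ s in (t-h)..t, f' s :=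
    intervalIntegral.integral_sub intervalIntegrable_const (hint (t-h) t hth (by linarith))
  have hone : ∫ s in (t-h)..t, (1:ℝ) = t - (t - h) := by
    simp
  rw [hcongr, hsplit, hone, hftc, hbkey t ht]
  ring
end
end

section
/- Bounds for the fluid solution (Lemma 1, properties 1, 3, and 5). Let α be a DDE initial condition with associated fluid solution (a,b). Then for all t ≥ 2h: a(t) ≥ 0, b(t) ≥ h, and 0 ≤ b(t) − a(t) ≤ 2h. -/
open MeasureTheory Set Filter Topology

noncomputable section

private lemma monoIcc' {f : ℝ → ℝ} {c d : ℝ}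
    (hcont : ContinuousOn f (Icc c d))
    (hder : ∀ x ∈ Ioo c d, ∃ k, 0 ≤ k ∧ HasDerivAt f k x) :
    MonotoneOn f (Icc c d) := by
  have hdiff : DifferentiableOn ℝ f (interior (Icc c d)) := by
    rw [interior_Icc]
    intro x hx
    obtain ⟨k, _, hk⟩ := hder x hx
    exact hk.differentiableAt.differentiableWithinAt
  refine monotoneOn_of_deriv_nonneg (convex_Icc c d) hcont hdiff ?_
  intro x hx
  rw [interior_Icc] at hx
  obtain ⟨k, hk0, hk⟩ := hder x hx
  rw [hk.deriv]; exact hk0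

private lemma monoIci' {f : ℝ → ℝ} {c : ℝ}
    (hcont : ContinuousOn f (Ici c))
    (hder : ∀ x ∈ Ioi c, ∃ k, 0 ≤ k ∧ HasDerivAt f k x) :
    MonotoneOn f (Ici c) := by
  have hdiff : DifferentiableOn ℝ f (interior (Ici c)) := by
    rw [interior_Ici]
    intro x hx
    obtain ⟨k, _, hk⟩ := hder x hx
    exact hk.differentiableAt.differentiableWithinAt
  refine monotoneOn_of_deriv_nonneg (convex_Ici c) hcont hdiff ?_
  intro x hx
  rw [interior_Ici] at hx
  obtain ⟨k, hk0, hk⟩ := hder x hx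
  rw [hk.deriv]; exact hk0

private lemma constIcc' {f : ℝ → ℝ} {c d : ℝ}
    (hcont : ContinuousOn f (Icc c d))
    (hder : ∀ x ∈ Ioo c d, HasDerivAt f 0 x) :
    ∀ x ∈ Icc c d, f x = f c := by
  have h1 := monoIcc' hcont (fun x hx => ⟨0, le_refl 0, hder x hx⟩)
  have h2 := monoIcc' (f := fun t => -f t) hcont.neg
    (fun x hx => ⟨0, le_refl 0, by simpa using (hder x hx).fun_neg⟩)
  intro x hx
  have hc : c ∈ Icc c d := ⟨le_refl c, hx.1.trans hx.2⟩
  have hle := h1 hc hx hx.1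
  have hge := h2 hc hx hx.1
  simp only [neg_le_neg_iff] at hge
  linarith

private lemma constIci' {f : ℝ → ℝ} {c : ℝ}
    (hcont : ContinuousOn f (Ici c))
    (hder : ∀ x ∈ Ioi c, HasDerivAt f 0 x) :
    ∀ x ∈ Ici c, f x = f c := by
  have h1 := monoIci' hcont (fun x hx => ⟨0, le_refl 0, hder x hx⟩)
  have h2 := monoIci' (f := fun t => -f t) hcont.neg
    (fun x hx => ⟨0, le_refl 0, by simpa using (hder x hx).fun_neg⟩)
  intro x hx
  have hle := h1 self_mem_Ici hx hx
  have hge := h2 self_mem_Ici hx hx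
  simp only [neg_le_neg_iff] at hge
  linarith

/-- **Lemma 1, properties 1, 3 and 5 (bounds for the fluid solution).**
If `(a, b)` is the fluid solution associated to a DDE initial condition, then for all
`t ≥ 2h`: `a(t) ≥ 0`, `b(t) ≥ h`, and `0 ≤ b(t) - a(t) ≤ 2h`. -/
theorem fluid_solution_bounds
    (h ah : ℝ) (u : ℝ → ℝ) (hh : 0 < h) (hα : IsDDEInit h ah u)
    (a b : ℝ → ℝ) (hfluid : IsFluidSolution h ah u a b) :
    ∀ t : ℝ, 2*h ≤ t →
      0 ≤ a t ∧ h ≤ b t ∧ 0 ≤ b t - a t ∧ b t - a t ≤ 2*h := by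
  obtain ⟨hah, hu_int, hu_bd⟩ := hα
  obtain ⟨hca, hcb, hbform, hahh, hd1, hd2⟩ := hfluid
  have h2h : h ≤ 2*h := by linarith
  -- integral nonnegativity
  have hint : ∀ t ∈ Icc h (2*h), 0 ≤ ∫ s in (t-h)..h, u s := by
    intro t ht
    apply intervalIntegral.integral_nonneg (by linarith [ht.2])
    intro s hs
    exact (hu_bd s ⟨by linarith [hs.1, ht.1], hs.2⟩).1
  -- b lower bound on [h,2h]
  have hb1 : ∀ t ∈ Icc h (2*h), ah + (t - h) ≤ b t := by
    intro t ht
    rw [hbform t ht]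
    have := hint t ht
    linarith
  have hb2h : b (2*h) = ah + h := by
    rw [hbform (2*h) ⟨h2h, le_refl _⟩, show (2*h - h) = h by ring,
      intervalIntegral.integral_same]
    ring
  -- Step B: key identity b(t+h) = a(t) + h for t ≥ h
  set f : ℝ → ℝ := fun t => b (t + h) - a t with hf
  have hmaps : MapsTo (fun t : ℝ => t + h) (Ici h) (Ici h) := by
    intro t ht
    simp only [mem_Ici] at *
    linarith
  have hcf : ContinuousOn f (Ici h) :=
    (hcb.comp ((continuous_id.add continuous_const).continuousOn) hmaps).sub hca
  have hfd1 : ∀ x ∈ Ioo h (2*h), HasDerivAt f 0 x := by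
    intro x hx
    have hax : HasDerivAt a (1 - 2 * a x / b x) x :=
      (hd1 x ⟨hx.1, hx.2.le⟩).hasDerivAt (Icc_mem_nhds hx.1 hx.2)
    have hbx := (hd2 (x + h) (by linarith [hx.1])).2
    rw [show x + h - h = x by ring] at hbx
    have hcomp : HasDerivAt (fun t => b (t + h)) ((1 - 2 * a x / b x) * 1) x :=
      hbx.comp x ((hasDerivAt_id x).add_const h)
    simpa [hf] using hcomp.fun_sub hax
  have hfd2 : ∀ x ∈ Ioi (2*h), HasDerivAt f 0 x := by
    intro x hx
    simp only [mem_Ioi] at hx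
    have hax : HasDerivAt a (1 - 2 * a x / b x) x := (hd2 x hx).1
    have hbx := (hd2 (x + h) (by linarith)).2
    rw [show x + h - h = x by ring] at hbx
    have hcomp : HasDerivAt (fun t => b (t + h)) ((1 - 2 * a x / b x) * 1) x :=
      hbx.comp x ((hasDerivAt_id x).add_const h)
    simpa [hf] using hcomp.fun_sub hax
  have hfh : f h = h := by
    simp only [hf]
    rw [show h + h = 2*h by ring, hb2h, hahh]
    ring
  have hkey : ∀ t, h ≤ t → b (t + h) = a t + h := by
    have hc1 := constIcc' (hcf.mono Icc_subset_Ici_self) hfd1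
    have hc2 := constIci' (hcf.mono (Ici_subset_Ici.2 h2h)) hfd2
    intro t ht
    have hft : f t = h := by
      rcases le_or_gt t (2*h) with h' | h'
      · rw [hc1 t ⟨ht, h'⟩, hfh]
      · rw [hc2 t h'.le, hc1 (2*h) ⟨h2h, le_refl _⟩, hfh]
    simp only [hf] at hft
    linarith
  -- Step C: positivity of a on [h, ∞)
  have apos : ∀ t, h ≤ t → 0 < a t := by
    by_contra hcon
    push_neg at hcon
    obtain ⟨t1, ht1, ht1a⟩ := hcon
    set S : Set ℝ := Ici h ∩ a ⁻¹' (Iic 0) with hS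
    have hSne : S.Nonempty := ⟨t1, ht1, ht1a⟩
    have hScl : IsClosed S := hca.preimage_isClosed_of_isClosed isClosed_Ici isClosed_Iic
    have hSbd : BddBelow S := ⟨h, fun x hx => hx.1⟩
    set t0 := sInf S with ht0
    have ht0S : t0 ∈ S := hScl.csInf_mem hSne hSbd
    have ht0h : h ≤ t0 := ht0S.1
    have ht0a : a t0 ≤ 0 := ht0S.2
    have hlt : ∀ t, h ≤ t → t < t0 → 0 < a t := by
      intro t ht htlt
      by_contra h'
      push_neg at h'
      exact absurd (csInf_le hSbd ⟨ht, h'⟩) (not_le.2 htlt)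
    have ht0h' : h < t0 := by
      rcases eq_or_lt_of_le ht0h with he | h'
      · exfalso
        rw [← he, hahh] at ht0a
        linarith
      · exact h'
    have hbt0 : 0 < b t0 := by
      rcases le_or_gt t0 (2*h) with h' | h'
      · have := hb1 t0 ⟨ht0h, h'⟩
        linarith
      · have h1 : b t0 = a (t0 - h) + h := by
          have := hkey (t0 - h) (by linarith)
          rwa [show t0 - h + h = t0 by ring] at this
        have h2 : 0 < a (t0 - h) := hlt (t0 - h) (by linarith) (by linarith)
        linarith
    set d := 1 - 2 * a t0 / b t0 with hd
    have hd1' : (1:ℝ) ≤ d := by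
      have : 2 * a t0 / b t0 ≤ 0 := div_nonpos_of_nonpos_of_nonneg (by linarith) hbt0.le
      simp only [hd]
      linarith
    have hslope : ∃ c, h ≤ c ∧ c < t0 ∧ Tendsto (slope a t0) (𝓝[Ioo c t0] t0) (𝓝 d) := by
      rcases le_or_gt t0 (2*h) with h' | h'
      · refine ⟨h, le_refl h, ht0h', ?_⟩
        have := hasDerivWithinAt_iff_tendsto_slope.1 (hd1 t0 ⟨ht0h', h'⟩)
        exact this.mono_left (nhdsWithin_mono t0
          (fun x hx => ⟨⟨hx.1.le, hx.2.le.trans h'⟩, ne_of_lt hx.2⟩))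
      · refine ⟨2*h, h2h, h', ?_⟩
        have := hasDerivAt_iff_tendsto_slope.1 (hd2 t0 h').1
        exact this.mono_left (nhdsWithin_mono t0 (fun x hx => ne_of_lt hx.2))
    obtain ⟨c, hch, hct0, htend⟩ := hslope
    have hne : (𝓝[Ioo c t0] t0).NeBot := right_nhdsWithin_Ioo_neBot hct0
    have hev : ∀ᶠ x in 𝓝[Ioo c t0] t0, slope a t0 x ≤ 0 := by
      filter_upwards [self_mem_nhdsWithin] with x hx
      have hax : 0 < a x := hlt x (le_of_lt (lt_of_le_of_lt hch hx.1)) hx.2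
      rw [slope_def_field]
      exact div_nonpos_of_nonneg_of_nonpos (by linarith) (by linarith [hx.2])
    have hd0 : d ≤ 0 := le_of_tendsto htend hev
    linarith
  -- b positivity on [h, ∞)
  have bpos : ∀ t, h ≤ t → 0 < b t := by
    intro t ht
    rcases le_or_gt t (2*h) with h' | h'
    · have := hb1 t ⟨ht, h'⟩
      linarith
    · have h1 : b t = a (t - h) + h := by
        have := hkey (t - h) (by linarith)
        rwa [show t - h + h = t by ring] at this
      have := apos (t - h) (by linarith)
      linarith
  -- Step E: a(t) - a(s) ≤ t - s for h ≤ s ≤ t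
  have hgmono : ∀ s t, h ≤ s → s ≤ t → a t - a s ≤ t - s := by
    set g : ℝ → ℝ := fun t => t - a t with hg
    have hcg : ContinuousOn g (Ici h) := (continuous_id.continuousOn).sub hca
    have hder1 : ∀ x ∈ Ioo h (2*h), ∃ k, 0 ≤ k ∧ HasDerivAt g k x := by
      intro x hx
      have hax : HasDerivAt a (1 - 2 * a x / b x) x :=
        (hd1 x ⟨hx.1, hx.2.le⟩).hasDerivAt (Icc_mem_nhds hx.1 hx.2)
      refine ⟨1 - (1 - 2 * a x / b x), ?_, (hasDerivAt_id x).sub hax⟩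
      have h1 : 0 ≤ 2 * a x / b x :=
        div_nonneg (by linarith [apos x hx.1.le]) (bpos x hx.1.le).le
      linarith
    have hder2 : ∀ x ∈ Ioi (2*h), ∃ k, 0 ≤ k ∧ HasDerivAt g k x := by
      intro x hx
      simp only [mem_Ioi] at hx
      have hxh : h ≤ x := by linarith
      refine ⟨1 - (1 - 2 * a x / b x), ?_, (hasDerivAt_id x).sub (hd2 x hx).1⟩
      have h1 : 0 ≤ 2 * a x / b x := div_nonneg (by linarith [apos x hxh]) (bpos x hxh).le
      linarith
    have mg1 : MonotoneOn g (Icc h (2*h)) := monoIcc' (hcg.mono Icc_subset_Ici_self) hder1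
    have mg2 : MonotoneOn g (Ici (2*h)) := monoIci' (hcg.mono (Ici_subset_Ici.2 h2h)) hder2
    intro s t hs hst
    have hcomb : g s ≤ g t := by
      rcases le_or_gt t (2*h) with h' | h'
      · exact mg1 ⟨hs, hst.trans h'⟩ ⟨hs.trans hst, h'⟩ hst
      · rcases le_or_gt s (2*h) with h'' | h''
        · exact (mg1 ⟨hs, h''⟩ ⟨h2h, le_refl _⟩ h'').trans
            (mg2 self_mem_Ici h'.le h'.le)
        · exact mg2 h''.le (h''.le.trans hst) hst
    simp only [hg] at hcomb
    linarith
  -- a ≤ b on [h, ∞)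
  have hab : ∀ t, h ≤ t → a t ≤ b t := by
    intro t ht
    rcases le_or_gt t (2*h) with h' | h'
    · have h1 := hgmono h t (le_refl h) ht
      have h2 := hb1 t ⟨ht, h'⟩
      rw [hahh] at h1
      linarith
    · have h1 : b t = a (t - h) + h := by
        have := hkey (t - h) (by linarith)
        rwa [show t - h + h = t by ring] at this
      have h2 := hgmono (t - h) t (by linarith) (by linarith)
      linarith
  -- Step F: a(s) - a(t) ≤ t - s for h ≤ s ≤ t
  have hg2 : ∀ s t, h ≤ s → s ≤ t → a s - a t ≤ t - s := by
    set g : ℝ → ℝ := fun t => t + a t with hg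
    have hcg : ContinuousOn g (Ici h) := (continuous_id.continuousOn).add hca
    have hnn : ∀ x, h ≤ x → 0 ≤ 1 + (1 - 2 * a x / b x) := by
      intro x hx
      have hb := bpos x hx
      have h1 : 2 * a x / b x ≤ 2 := by
        rw [div_le_iff₀ hb]
        have := hab x hx
        linarith
      linarith
    have hder1 : ∀ x ∈ Ioo h (2*h), ∃ k, 0 ≤ k ∧ HasDerivAt g k x := by
      intro x hx
      have hax : HasDerivAt a (1 - 2 * a x / b x) x :=
        (hd1 x ⟨hx.1, hx.2.le⟩).hasDerivAt (Icc_mem_nhds hx.1 hx.2)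
      exact ⟨1 + (1 - 2 * a x / b x), hnn x hx.1.le, (hasDerivAt_id x).add hax⟩
    have hder2 : ∀ x ∈ Ioi (2*h), ∃ k, 0 ≤ k ∧ HasDerivAt g k x := by
      intro x hx
      simp only [mem_Ioi] at hx
      exact ⟨1 + (1 - 2 * a x / b x), hnn x (by linarith), (hasDerivAt_id x).add (hd2 x hx).1⟩
    have mg1 : MonotoneOn g (Icc h (2*h)) := monoIcc' (hcg.mono Icc_subset_Ici_self) hder1
    have mg2 : MonotoneOn g (Ici (2*h)) := monoIci' (hcg.mono (Ici_subset_Ici.2 h2h)) hder2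
    intro s t hs hst
    have hcomb : g s ≤ g t := by
      rcases le_or_gt t (2*h) with h' | h'
      · exact mg1 ⟨hs, hst.trans h'⟩ ⟨hs.trans hst, h'⟩ hst
      · rcases le_or_gt s (2*h) with h'' | h''
        · exact (mg1 ⟨hs, h''⟩ ⟨h2h, le_refl _⟩ h'').trans
            (mg2 self_mem_Ici h'.le h'.le)
        · exact mg2 h''.le (h''.le.trans hst) hst
    simp only [hg] at hcomb
    linarith
  -- final assembly
  intro t ht
  have hth : h ≤ t := le_trans h2h ht
  have hbt : b t = a (t - h) + h := by
    have := hkey (t - h) (by linarith)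
    rwa [show t - h + h = t by ring] at this
  have h1 := apos t hth
  have h2 := apos (t - h) (by linarith)
  have h3 := hab t hth
  have h4 := hg2 (t - h) t (by linarith) (by linarith)
  exact ⟨h1.le, by linarith, by linarith, by linarith⟩
end
end

section
/- Pathwise bound on the rescaled tip process in terms of the free-tip deviation. Let α be a DDE initial condition with fluid solution (a,b), let λ ≥ 1/h with m := λh ∈ ℕ, let v ∈ F(α,λ), and consider the tangle process with initial data (ξ_α, v). Define g(t) := sup_{h ≤ s ≤ t} |A^{(λ)}(s) − a(s)|. Then pathwise, for every t ≥ h: sup_{h ≤ s ≤ t} |B^{(λ)}(s) − b(s)| ≤ g(t) + 6 h^{1/2} λ^{−1/2}. -/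
open MeasureTheory Set

noncomputable section

/-- Membership `v ∈ F(α, λ)`: `v ∈ {0,1,2}^m` and the initial rescaled tip count
`B_v^{(λ)}(t_n) = L_n / λ`, where `L_{m+j} = ξ_α + j + Σ_{i=j+1}^m v_i` and
`ξ_α = max(⌊λ a_h⌋, 1)`, satisfies
`|B_v^{(λ)}(t_n) - b(t_n)| ≤ 4 h^{1/2} λ^{-1/2} + λ⁻¹` for all `m ≤ n ≤ 2m`. -/
def MemF (h ah lam : ℝ) (b : ℝ → ℝ) (m : ℕ) (v : ℕ → ℕ) : Prop :=
  (∀ i, v i ≤ 2) ∧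
  ∀ n : ℕ, m ≤ n → n ≤ 2*m →
    |(((max ⌊lam * ah⌋ 1 : ℤ) + ((n - m : ℕ) : ℤ)
        + ∑ i ∈ Finset.Icc (n - m + 1) m, (v i : ℤ) : ℤ) : ℝ) / lam
      - b ((n : ℝ) / lam)| ≤ 4 * Real.sqrt h / Real.sqrt lam + 1 / lam

lemma myConstOn {f : ℝ → ℝ} {c d : ℝ} (hcd : c ≤ d)
    (hf : ContinuousOn f (Icc c d))
    (hder : ∀ x ∈ Ioo c d, HasDerivAt f 0 x) :
    ∀ x ∈ Icc c d, f x = f c := by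
  have hdiff : DifferentiableOn ℝ f (interior (Icc c d)) := by
    rw [interior_Icc]
    exact fun x hx => (hder x hx).differentiableAt.differentiableWithinAt
  have hd0 : ∀ x ∈ interior (Icc c d), deriv f x = 0 := by
    rw [interior_Icc]; exact fun x hx => (hder x hx).deriv
  have hmono := monotoneOn_of_deriv_nonneg (convex_Icc c d) hf hdiff (fun x hx => (hd0 x hx).ge)
  have hanti := antitoneOn_of_deriv_nonpos (convex_Icc c d) hf hdiff (fun x hx => (hd0 x hx).le)
  intro x hx
  exact le_antisymm (hanti (left_mem_Icc.2 hcd) hx hx.1) (hmono (left_mem_Icc.2 hcd) hx hx.1)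

lemma b_eq_a_shift (h ah : ℝ) (u : ℝ → ℝ) (hh : 0 < h) (a b : ℝ → ℝ)
    (hfluid : IsFluidSolution h ah u a b) :
    ∀ t, 2*h ≤ t → b t = a (t - h) + h := by
  obtain ⟨haC, hbC, hbform, hah, hdW, hdF⟩ := hfluid
  set f : ℝ → ℝ := fun t => b t - a (t - h) with hf
  have hfc : ContinuousOn f (Ici (2*h)) := by
    apply ContinuousOn.sub
    · exact hbC.mono (Ici_subset_Ici.2 (by linarith))
    · exact haC.comp (continuousOn_id.sub continuousOn_const)
        (fun x hx => by simp only [mem_Ici] at *; linarith)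
  have hf2h : f (2*h) = h := by
    have h2 : b (2*h) = ah + 2*h - h + ∫ s in (2*h-h)..h, u s :=
      hbform (2*h) ⟨by linarith, le_rfl⟩
    have : (2*h - h) = h := by ring
    rw [hf]
    simp only [h2, this, intervalIntegral.integral_same, hah]
    ring
  have hder : ∀ x, 2*h < x → x ≠ 3*h → HasDerivAt f 0 x := by
    intro x hx hx3
    have hb := (hdF x hx).2
    have ha : HasDerivAt a (1 - 2 * a (x - h) / b (x - h)) (x - h) := by
      rcases lt_trichotomy (x - h) (2*h) with hc | hc | hc
      · have hmem : x - h ∈ Ioo h (2*h) := ⟨by linarith, hc⟩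
        exact (hdW (x-h) ⟨hmem.1, hmem.2.le⟩).hasDerivAt (Icc_mem_nhds hmem.1 hmem.2)
      · exact absurd (by linarith : x = 3*h) hx3
      · exact (hdF (x-h) hc).1
    have hsub : HasDerivAt (fun t : ℝ => t - h) 1 x := (hasDerivAt_id x).sub_const h
    have ha' : HasDerivAt (fun t => a (t - h)) ((1 - 2 * a (x - h) / b (x - h)) * 1) x :=
      HasDerivAt.comp x ha hsub
    rw [mul_one] at ha'
    have := hb.sub ha'
    rwa [sub_self] at this
  have key23 : ∀ x ∈ Icc (2*h) (3*h), f x = f (2*h) :=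
    myConstOn (by linarith) (hfc.mono (Icc_subset_Ici_self))
      (fun x hx => hder x hx.1 (ne_of_lt hx.2))
  intro t ht
  rcases le_or_gt t (3*h) with h3 | h3
  · have := key23 t ⟨ht, h3⟩
    rw [hf2h] at this
    simp only [hf] at this; linarith
  · have f3h : f (3*h) = h := by
      have := key23 (3*h) ⟨by linarith, le_rfl⟩; rw [hf2h] at this; linarith
    have key3 : ∀ x ∈ Icc (3*h) t, f x = f (3*h) :=
      myConstOn (by linarith) (hfc.mono (fun x hx => by
        simp only [mem_Icc, mem_Ici] at *; linarith [hx.1]))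
        (fun x hx => hder x (by linarith [hx.1]) (ne_of_gt hx.1))
    have := key3 t ⟨h3.le, le_rfl⟩
    rw [f3h] at this
    simp only [hf] at this; linarith

lemma b_lip (h ah : ℝ) (u : ℝ → ℝ) (hh : 0 < h) (b : ℝ → ℝ)
    (hu : MeasureTheory.IntegrableOn u (Set.Icc 0 h))
    (hub : ∀ t ∈ Set.Icc (0:ℝ) h, 0 ≤ u t ∧ u t ≤ 2)
    (hbform : ∀ t ∈ Set.Icc h (2*h), b t = ah + t - h + ∫ s in (t-h)..h, u s) :
    ∀ s1 s2, h ≤ s1 → s1 ≤ s2 → s2 ≤ 2*h → |b s2 - b s1| ≤ s2 - s1 := by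
  intro s1 s2 h1 h12 h2
  have hint : ∀ x y : ℝ, 0 ≤ x → x ≤ h → 0 ≤ y → y ≤ h → IntervalIntegrable u volume x y := by
    intro x y hx hx' hy hy'
    apply MeasureTheory.IntegrableOn.intervalIntegrable
    apply hu.mono_set
    rw [show Icc (0:ℝ) h = uIcc 0 h from (uIcc_of_le hh.le).symm]
    exact uIcc_subset_uIcc (by rw [uIcc_of_le hh.le]; exact ⟨hx, hx'⟩)
      (by rw [uIcc_of_le hh.le]; exact ⟨hy, hy'⟩)
  have hb1 := hbform s1 ⟨h1, by linarith⟩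
  have hb2 := hbform s2 ⟨by linarith, h2⟩
  have hi1 : IntervalIntegrable u volume (s1 - h) (s2 - h) :=
    hint _ _ (by linarith) (by linarith) (by linarith) (by linarith)
  have hi2 : IntervalIntegrable u volume (s2 - h) h :=
    hint _ _ (by linarith) (by linarith) hh.le le_rfl
  have hadd := intervalIntegral.integral_add_adjacent_intervals hi1 hi2
  set J := ∫ s in (s1-h)..(s2-h), u s with hJ
  have hJ0 : 0 ≤ J := by
    apply intervalIntegral.integral_nonneg (by linarith)
    intro x hx
    exact (hub x ⟨by linarith [hx.1], by linarith [hx.2]⟩).1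
  have hJ2 : J ≤ 2 * (s2 - s1) := by
    have := intervalIntegral.integral_mono_on (by linarith : s1 - h ≤ s2 - h) hi1
      (intervalIntegrable_const) (fun x hx => (hub x ⟨by linarith [hx.1], by linarith [hx.2]⟩).2)
    rw [intervalIntegral.integral_const] at this
    calc J ≤ ((s2 - h) - (s1 - h)) • (2:ℝ) := this
      _ = 2 * (s2 - s1) := by simp [smul_eq_mul]; ring
  have hdiff : b s2 - b s1 = (s2 - s1) - J := by
    rw [hb1, hb2]
    have : (∫ s in (s1-h)..h, u s) = J + ∫ s in (s2-h)..h, u s := hadd.symm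
    rw [this]
    ring
  rw [hdiff, abs_le]
  constructor <;> linarith

lemma X_sum (m : ℕ) (U : ℕ → ℕ) (X : ℕ → ℤ)
    (hX : ∀ n, m ≤ n → X (n+1) = X n + 1 - (U (n+1) : ℤ)) :
    ∀ k n, m ≤ k → k ≤ n →
      X n = X k + ((n : ℤ) - (k : ℤ)) - ∑ j ∈ Finset.Icc (k+1) n, (U j : ℤ) := by
  intro k n hmk hkn
  induction n, hkn using Nat.le_induction with
  | base => simp [Finset.Icc_self, Finset.Icc_eq_empty_of_lt (Nat.lt_succ_self k)]
  | succ n hkn ih =>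
    have hsum : ∑ j ∈ Finset.Icc (k+1) (n+1), (U j : ℤ)
        = (∑ j ∈ Finset.Icc (k+1) n, (U j : ℤ)) + (U (n+1) : ℤ) := by
      rw [← Finset.sum_Icc_succ_top (by omega : k + 1 ≤ n + 1)]
    rw [hX n (le_trans hmk hkn), ih, hsum]
    push_cast
    ring

lemma X_abs (m : ℕ) (U : ℕ → ℕ) (X : ℕ → ℤ) (hU : ∀ n, U n ≤ 2)
    (hX : ∀ n, m ≤ n → X (n+1) = X n + 1 - (U (n+1) : ℤ)) :
    ∀ n, m ≤ n → |X n| ≤ |X m| + (n : ℤ) := by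
  intro n hn
  induction n, hn using Nat.le_induction with
  | base => have : (0:ℤ) ≤ m := Int.ofNat_nonneg m; linarith
  | succ n hn ih =>
    have h1 : |(1 : ℤ) - (U (n+1) : ℤ)| ≤ 1 := by
      have := hU (n+1)
      rw [abs_le]
      omega
    calc |X (n+1)| = |X n + (1 - (U (n+1) : ℤ))| := by rw [hX n hn]; ring_nf
      _ ≤ |X n| + |(1:ℤ) - (U (n+1) : ℤ)| := abs_add_le _ _
      _ ≤ (|X m| + n) + 1 := add_le_add ih h1
      _ = |X m| + ((n:ℤ)+1) := by ring
      _ = |X m| + ((n+1 : ℕ) : ℤ) := by push_cast; ring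

lemma L_init (m n : ℕ) (hmn : m ≤ n) (hn2 : n ≤ 2*m)
    (ξ : ℤ) (U v : ℕ → ℕ) (X W L : ℕ → ℤ)
    (hXm : X m = ξ)
    (hX : ∀ n, m ≤ n → X (n+1) = X n + 1 - (U (n+1) : ℤ))
    (hW : ∀ n, W n = ∑ j ∈ Finset.Icc (n - m + 1) n, (U j : ℤ))
    (hL : ∀ n, L n = W n + X n)
    (hUinit : ∀ i, 1 ≤ i → i ≤ m → U i = v i) :
    L n = ξ + ((n - m : ℕ) : ℤ) + ∑ i ∈ Finset.Icc (n-m+1) m, (v i : ℤ) := by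
  have hXn := X_sum m U X hX m n le_rfl hmn
  have hsplit : (∑ j ∈ Finset.Icc (n-m+1) m, (U j : ℤ))
      + ∑ j ∈ Finset.Icc (m+1) n, (U j : ℤ)
      = ∑ j ∈ Finset.Icc (n-m+1) n, (U j : ℤ) := by
    rw [Finset.Icc_add_one_left_eq_Ioc, Finset.Icc_add_one_left_eq_Ioc, Finset.Icc_add_one_left_eq_Ioc]
    exact Finset.sum_Ioc_consecutive _ (by omega) hmn
  have hvv : (∑ i ∈ Finset.Icc (n-m+1) m, (U i : ℤ))
      = ∑ i ∈ Finset.Icc (n-m+1) m, (v i : ℤ) := by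
    apply Finset.sum_congr rfl
    intro i hi
    rw [Finset.mem_Icc] at hi
    rw [hUinit i (by omega) hi.2]
  have hcast : ((n - m : ℕ) : ℤ) = (n : ℤ) - (m : ℤ) := by omega
  rw [hL, hW, hXn, hXm, hcast, ← hvv]
  linarith [hsplit]

lemma L_late (m n : ℕ) (hn2 : 2*m ≤ n)
    (U : ℕ → ℕ) (X W L : ℕ → ℤ)
    (hX : ∀ n, m ≤ n → X (n+1) = X n + 1 - (U (n+1) : ℤ))
    (hW : ∀ n, W n = ∑ j ∈ Finset.Icc (n - m + 1) n, (U j : ℤ))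
    (hL : ∀ n, L n = W n + X n) :
    L n = X (n - m) + (m : ℤ) := by
  have hXn := X_sum m U X hX (n - m) n (by omega) (by omega)
  have hcast : ((n - m : ℕ) : ℤ) = (n : ℤ) - (m : ℤ) := by omega
  rw [hL, hW, hXn, hcast]
  ring

lemma le_biSup_real {S : Set ℝ} {f : ℝ → ℝ} (B : ℝ) (hf : ∀ r ∈ S, f r ≤ B)
    {r0 : ℝ} (hr0 : r0 ∈ S) : f r0 ≤ ⨆ r ∈ S, f r := by
  have hbdd : BddAbove (Set.range fun r => ⨆ _ : r ∈ S, f r) := by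
    refine ⟨max B 0, ?_⟩
    rintro x ⟨r, rfl⟩
    show (⨆ _ : r ∈ S, f r) ≤ max B 0
    by_cases hr : r ∈ S
    · rw [ciSup_pos (f := fun _ => f r) hr]
      exact le_max_of_le_left (hf r hr)
    · haveI : IsEmpty (r ∈ S) := ⟨hr⟩
      rw [Real.iSup_of_isEmpty (fun _ => f r)]
      exact le_max_right _ _
  calc f r0 = ⨆ _ : r0 ∈ S, f r0 := (ciSup_pos (f := fun _ => f r0) hr0).symm
    _ ≤ ⨆ r, ⨆ _ : r ∈ S, f r := le_ciSup hbdd r0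

/-- **Pathwise bound on the rescaled tip process in terms of the free-tip deviation.**
Let `α` be a DDE initial condition with fluid solution `(a, b)`, let `λ ≥ 1/h` with
`m = λ h` a positive integer, let `v ∈ F(α, λ)`, and consider any sample path of the
tangle process with initial data `(ξ_α, v)`. With `A^{(λ)}(t) = X_{⌊λt⌋}/λ`,
`B^{(λ)}(t) = L_{⌊λt⌋}/λ` and `g(t) = sup_{h ≤ s ≤ t} |A^{(λ)}(s) - a(s)|`, one has
for every `t ≥ h`:
`sup_{h ≤ s ≤ t} |B^{(λ)}(s) - b(s)| ≤ g(t) + 6 h^{1/2} λ^{-1/2}`. -/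
theorem tangle_pathwise_B_bound
    (h ah : ℝ) (u : ℝ → ℝ) (hh : 0 < h)
    (hα : IsDDEInit h ah u)
    (a b : ℝ → ℝ) (hfluid : IsFluidSolution h ah u a b)
    (lam : ℝ) (hlam : 1/h ≤ lam)
    (m : ℕ) (hm : 1 ≤ m) (hmlam : (m : ℝ) = lam * h)
    (v : ℕ → ℕ) (hvF : MemF h ah lam b m v)
    (U : ℕ → ℕ) (hU : ∀ n, U n ≤ 2)
    (hUinit : ∀ i, 1 ≤ i → i ≤ m → U i = v i)
    (X W L : ℕ → ℤ)
    (hXm : X m = max ⌊lam * ah⌋ 1)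
    (hX : ∀ n, m ≤ n → X (n+1) = X n + 1 - (U (n+1) : ℤ))
    (hW : ∀ n, W n = ∑ j ∈ Finset.Icc (n - m + 1) n, (U j : ℤ))
    (hL : ∀ n, L n = W n + X n) :
    ∀ t : ℝ, h ≤ t → ∀ s : ℝ, h ≤ s → s ≤ t →
      |(L ⌊lam * s⌋₊ : ℝ) / lam - b s|
        ≤ (⨆ r ∈ Set.Icc h t, |(X ⌊lam * r⌋₊ : ℝ) / lam - a r|)
          + 6 * Real.sqrt h / Real.sqrt lam := by

  intro t ht s hs hst
  have hlam0 : 0 < lam := lt_of_lt_of_le (by positivity) hlam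
  have hl1 : 1 ≤ lam * h := by
    calc (1:ℝ) ≤ (m : ℝ) := by exact_mod_cast hm
      _ = lam * h := hmlam
  have hmh : (m : ℝ) / lam = h := by
    rw [hmlam]; field_simp
  -- 1/lam ≤ √h/√lam
  have hinvl : 1/lam ≤ Real.sqrt h / Real.sqrt lam := by
    rw [div_le_div_iff₀ hlam0 (Real.sqrt_pos.2 hlam0)]
    have h1 : (1:ℝ) ≤ Real.sqrt h * Real.sqrt lam := by
      rw [← Real.sqrt_mul hh.le]
      have : (1:ℝ) = Real.sqrt 1 := (Real.sqrt_one).symm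
      rw [this]
      exact Real.sqrt_le_sqrt (by nlinarith)
    calc (1:ℝ) * Real.sqrt lam = Real.sqrt lam := one_mul _
      _ ≤ (Real.sqrt h * Real.sqrt lam) * Real.sqrt lam := by
          nlinarith [Real.sqrt_nonneg lam, Real.sqrt_nonneg h]
      _ = Real.sqrt h * (Real.sqrt lam * Real.sqrt lam) := by ring
      _ = Real.sqrt h * lam := by rw [Real.mul_self_sqrt hlam0.le]
  have hsq6 : 0 ≤ 6 * Real.sqrt h / Real.sqrt lam := by positivity
  -- the sup and its basic properties
  set gsup := ⨆ r ∈ Set.Icc h t, |(X ⌊lam * r⌋₊ : ℝ) / lam - a r| with hgsup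
  have hg0 : 0 ≤ gsup :=
    Real.iSup_nonneg fun r => Real.iSup_nonneg fun _ => abs_nonneg _
  obtain ⟨C, hC⟩ := (isCompact_Icc : IsCompact (Icc h t)).exists_bound_of_continuousOn
    (hfluid.1.mono (Icc_subset_Ici_self))
  set N := ⌊lam * t⌋₊ with hN
  have hfB : ∀ r ∈ Icc h t, |(X ⌊lam * r⌋₊ : ℝ) / lam - a r|
      ≤ ((|X m| + (N:ℤ) : ℤ) : ℝ)/lam + C := by
    intro r hr
    have hmr : (m:ℝ) ≤ lam * r := by
      rw [hmlam]; exact mul_le_mul_of_nonneg_left hr.1 hlam0.le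
    have hnr : m ≤ ⌊lam * r⌋₊ := Nat.le_floor hmr
    have hnrt : ⌊lam * r⌋₊ ≤ N :=
      Nat.floor_le_floor (mul_le_mul_of_nonneg_left hr.2 hlam0.le)
    have h1 : |X ⌊lam * r⌋₊| ≤ |X m| + (N : ℤ) := by
      have := X_abs m U X hU hX _ hnr
      have h2 : ((⌊lam * r⌋₊ : ℕ) : ℤ) ≤ (N : ℤ) := by exact_mod_cast hnrt
      linarith
    have h3 : |(X ⌊lam * r⌋₊ : ℝ)| ≤ ((|X m| + (N:ℤ) : ℤ) : ℝ) := by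
      rw [← Int.cast_abs]
      exact_mod_cast h1
    calc |(X ⌊lam * r⌋₊ : ℝ) / lam - a r|
        ≤ |(X ⌊lam * r⌋₊ : ℝ) / lam| + |a r| := abs_sub _ _
      _ = |(X ⌊lam * r⌋₊ : ℝ)| / lam + |a r| := by
          rw [abs_div, abs_of_pos hlam0]
      _ ≤ ((|X m| + (N:ℤ) : ℤ) : ℝ)/lam + C := by
          gcongr
          have := hC r hr
          rwa [Real.norm_eq_abs] at this
  have hgle : ∀ r ∈ Icc h t, |(X ⌊lam * r⌋₊ : ℝ) / lam - a r| ≤ gsup :=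
    fun r hr => le_biSup_real _ hfB hr
  -- basic facts about n = ⌊lam s⌋₊
  have hls0 : 0 ≤ lam * s := mul_nonneg hlam0.le (by linarith)
  set n := ⌊lam * s⌋₊ with hn
  have hnm : m ≤ n := Nat.le_floor (by rw [hmlam]; exact mul_le_mul_of_nonneg_left hs hlam0.le)
  have hfl_le : (n : ℝ) ≤ lam * s := Nat.floor_le hls0
  rcases lt_or_ge s (2*h) with hcase | hcase
  · -- initial regime: s < 2h, so n ≤ 2m
    have hn2 : n ≤ 2*m := by
      have h2 : (n : ℝ) < ((2*m : ℕ) : ℝ) := by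
        push_cast
        calc (n:ℝ) ≤ lam * s := hfl_le
          _ < lam * (2*h) := by nlinarith
          _ = 2 * (m:ℝ) := by rw [hmlam]; ring
      exact le_of_lt (by exact_mod_cast h2)
    have hLn := L_init m n hnm hn2 _ U v X W L hXm hX hW hL hUinit
    have hB := hvF.2 n hnm hn2
    have hLcast : (L n : ℝ) = (((max ⌊lam * ah⌋ 1 : ℤ) + ((n - m : ℕ) : ℤ)
        + ∑ i ∈ Finset.Icc (n - m + 1) m, (v i : ℤ) : ℤ) : ℝ) := by
      rw [hLn]
    rw [← hLcast] at hB
    -- distance from s to the grid point n/lam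
    have htn_le : (n : ℝ)/lam ≤ s := by
      rw [div_le_iff₀ hlam0]; linarith [hfl_le]
    have htn_ge : h ≤ (n : ℝ)/lam := by
      rw [le_div_iff₀ hlam0]
      calc h * lam = (m:ℝ) := by rw [hmlam]; ring
        _ ≤ (n:ℝ) := by exact_mod_cast hnm
    have htn2 : (n : ℝ)/lam ≤ 2*h := le_trans htn_le (le_of_lt hcase)
    have hgap : s - (n : ℝ)/lam ≤ 1/lam := by
      have hlt : lam * s < (n : ℝ) + 1 := Nat.lt_floor_add_one (lam * s)
      have : s ≤ ((n:ℝ) + 1)/lam := by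
        rw [le_div_iff₀ hlam0]; linarith
      have heq : ((n:ℝ)+1)/lam - (n:ℝ)/lam = 1/lam := by
        field_simp
        ring
      linarith
    have hblip := b_lip h ah u hh b hα.2.1 hα.2.2 hfluid.2.2.1 ((n:ℝ)/lam) s htn_ge htn_le
      (le_of_lt hcase)
    calc |(L n : ℝ) / lam - b s|
        ≤ |(L n : ℝ)/lam - b ((n:ℝ)/lam)| + |b ((n:ℝ)/lam) - b s| := abs_sub_le _ _ _
      _ ≤ (4 * Real.sqrt h / Real.sqrt lam + 1/lam) + (s - (n:ℝ)/lam) := by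
          have := abs_sub_comm (b ((n:ℝ)/lam)) (b s)
          exact add_le_add hB (by rw [this]; exact hblip)
      _ ≤ (4 * Real.sqrt h / Real.sqrt lam + 1/lam) + 1/lam := by linarith
      _ ≤ 4 * Real.sqrt h / Real.sqrt lam + 2 * (Real.sqrt h / Real.sqrt lam) := by linarith
      _ = 6 * Real.sqrt h / Real.sqrt lam := by ring
      _ ≤ gsup + 6 * Real.sqrt h / Real.sqrt lam := by linarith
  · -- late regime: 2h ≤ s, so 2m ≤ n
    have hn2m : 2*m ≤ n := by
      apply Nat.le_floor
      push_cast
      calc ((2:ℝ) * m) = lam * (2*h) := by rw [hmlam]; ring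
        _ ≤ lam * s := mul_le_mul_of_nonneg_left hcase hlam0.le
    have hLn := L_late m n hn2m U X W L hX hW hL
    have hfloor : ⌊lam * (s - h)⌋₊ = n - m := by
      have heq : lam * (s - h) = lam * s - (m : ℕ) := by
        push_cast
        rw [hmlam]; ring
      rw [heq]
      have hlt : lam * s < (n : ℝ) + 1 := Nat.lt_floor_add_one (lam * s)
      have hmn : ((m : ℕ) : ℝ) ≤ (n : ℝ) := by exact_mod_cast hnm
      rw [Nat.floor_eq_iff (by linarith), Nat.cast_sub hnm]
      constructor <;> linarith
    have hbeq := b_eq_a_shift h ah u hh a b hfluid s hcase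
    have hmem : s - h ∈ Icc h t := ⟨by linarith, by linarith⟩
    have hval : (L n : ℝ) / lam - b s = (X (n - m) : ℝ)/lam - a (s - h) := by
      have hLc : (L n : ℝ) = (X (n-m) : ℝ) + (m:ℝ) := by
        rw [hLn]; push_cast; ring
      rw [hLc, hbeq, add_div, hmh]
      ring
    rw [hval]
    have := hgle (s - h) hmem
    rw [hfloor] at this
    linarith
end
end

section
/- Non-expansiveness of the one-step delay map (first inequality of (pf2:6)). Fix h > 0, let x : [0,h] → ℝ be continuous with x(t) + h > 0 for all t ∈ [0,h], and let y : [0,h] → ℝ be the solution of y′(t) = (x(t) − 2y(t))/(2(x(t) + h)) with y(0) = x(h). Then for every t ∈ [0,h]: |y(t)| ≤ max{ |x(h)|, ‖x‖/2 }; in particular ‖y‖ ≤ ‖x‖. -/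
open Set

noncomputable section

/-- **Non-expansiveness of the one-step delay map (first inequality of (pf2:6)).**
Fix `h > 0`, let `x : [0,h] → ℝ` be continuous with `x(t) + h > 0`, and let `y` solve
`y′ = (x - 2y)/(2(x + h))` on `[0,h]` with `y(0) = x(h)`. Then for every `t ∈ [0,h]`,
`|y(t)| ≤ max(|x(h)|, ‖x‖/2)`; in particular `‖y‖ ≤ ‖x‖`. -/
theorem delay_map_nonexpansive
    (h : ℝ) (hh : 0 < h) (x y : ℝ → ℝ)
    (hxc : ContinuousOn x (Set.Icc 0 h))
    (hxpos : ∀ t ∈ Set.Icc (0:ℝ) h, 0 < x t + h)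
    (hy0 : y 0 = x h)
    (hyode : ∀ t ∈ Set.Icc (0:ℝ) h,
      HasDerivWithinAt y ((x t - 2 * y t) / (2 * (x t + h))) (Set.Icc 0 h) t) :
    (∀ t ∈ Set.Icc (0:ℝ) h,
      |y t| ≤ max |x h| ((⨆ s ∈ Set.Icc (0:ℝ) h, |x s|) / 2)) ∧
    (⨆ t ∈ Set.Icc (0:ℝ) h, |y t|) ≤ ⨆ t ∈ Set.Icc (0:ℝ) h, |x t| := by
  have hyc : ContinuousOn y (Set.Icc 0 h) := fun t ht => (hyode t ht).continuousWithinAt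
  -- boundedness of |x| on the compact interval
  obtain ⟨C, hC⟩ := isCompact_Icc.exists_bound_of_continuousOn hxc
  set K : ℝ := ⨆ s ∈ Set.Icc (0:ℝ) h, |x s| with hKdef
  have hbdd : BddAbove (Set.range fun s => ⨆ _ : s ∈ Set.Icc (0:ℝ) h, |x s|) := by
    refine ⟨max C 0, ?_⟩
    rintro _ ⟨s, rfl⟩
    dsimp only
    by_cases hs : s ∈ Set.Icc (0:ℝ) h
    · rw [ciSup_pos hs]
      exact le_max_of_le_left (hC s hs)
    · rw [ciSup_neg hs, Real.sSup_empty]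
      exact le_max_right _ _
  have hxleK : ∀ s ∈ Set.Icc (0:ℝ) h, |x s| ≤ K := by
    intro s hs
    have := le_ciSup hbdd s
    rwa [ciSup_pos hs] at this
  have h0S : (0:ℝ) ∈ Set.Icc (0:ℝ) h := ⟨le_rfl, hh.le⟩
  have hhS : h ∈ Set.Icc (0:ℝ) h := ⟨hh.le, le_rfl⟩
  have hK0 : 0 ≤ K := (abs_nonneg _).trans (hxleK 0 h0S)
  set M : ℝ := max |x h| (K / 2) with hMdef
  have hM0 : 0 ≤ M := le_trans (abs_nonneg _) (le_max_left _ _)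
  have hxle2M : ∀ t ∈ Set.Icc (0:ℝ) h, x t ≤ 2 * M ∧ -(2 * M) ≤ x t := by
    intro t ht
    have h1 : |x t| ≤ K := hxleK t ht
    have h2 : K / 2 ≤ M := le_max_right _ _
    have h3 := abs_le.mp h1
    constructor <;> nlinarith [h3.1, h3.2]
  -- the key barrier argument, for any ε > 0
  have barrier : ∀ ε > 0, ∀ t ∈ Set.Icc (0:ℝ) h,
      y t ≤ M + ε * (1 + t) ∧ -y t ≤ M + ε * (1 + t) := by
    intro ε hε t ht
    have hBc : ContinuousOn (fun t : ℝ => M + ε * (1 + t)) (Set.Icc 0 h) := by fun_prop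
    have hB' : ∀ s ∈ Set.Ico (0:ℝ) h,
        HasDerivWithinAt (fun t : ℝ => M + ε * (1 + t)) ε (Set.Ici s) s := by
      intro s _
      have : HasDerivAt (fun t : ℝ => M + ε * (1 + t)) (ε * 1) s := by
        exact (((hasDerivAt_id s).const_add 1).const_mul ε).const_add M
      simpa using this.hasDerivWithinAt
    have hderiv : ∀ s ∈ Set.Ico (0:ℝ) h,
        HasDerivWithinAt y ((x s - 2 * y s) / (2 * (x s + h))) (Set.Ici s) s := by
      intro s hs
      exact (hyode s (Set.Ico_subset_Icc_self hs)).mono_of_mem_nhdsWithin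
        (Icc_mem_nhdsGE_of_mem hs)
    have hupper : ∀ ⦃s⦄, s ∈ Set.Icc (0:ℝ) h → y s ≤ M + ε * (1 + s) := by
      apply image_le_of_deriv_right_lt_deriv_boundary' hyc hderiv
      · have : y 0 ≤ M := by
          rw [hy0]; exact (le_abs_self _).trans (le_max_left _ _)
        nlinarith
      · exact hBc
      · exact hB'
      · intro s hs heq
        have hpos := hxpos s (Set.Ico_subset_Icc_self hs)
        have hx2M := (hxle2M s (Set.Ico_subset_Icc_self hs)).1
        have hnum : x s - 2 * y s < 0 := by nlinarith [hs.1]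
        calc (x s - 2 * y s) / (2 * (x s + h)) < 0 :=
              div_neg_of_neg_of_pos hnum (by linarith)
          _ < ε := hε
    have hlower : ∀ ⦃s⦄, s ∈ Set.Icc (0:ℝ) h → -y s ≤ M + ε * (1 + s) := by
      apply image_le_of_deriv_right_lt_deriv_boundary'
        (f' := fun s => -((x s - 2 * y s) / (2 * (x s + h)))) hyc.neg
        (fun s hs => (hderiv s hs).neg)
      · have : -y 0 ≤ M := by
          rw [hy0]; exact (neg_le_abs _).trans (le_max_left _ _)
        simp only [Pi.neg_apply]
        nlinarith
      · exact hBc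
      · exact hB'
      · intro s hs heq
        have hpos := hxpos s (Set.Ico_subset_Icc_self hs)
        have hx2M := (hxle2M s (Set.Ico_subset_Icc_self hs)).2
        have hnum : -(x s - 2 * y s) < 0 := by nlinarith [hs.1, show -y s = M + ε * (1 + s) from heq]
        calc -((x s - 2 * y s) / (2 * (x s + h))) = -(x s - 2 * y s) / (2 * (x s + h)) := by
              ring
          _ < 0 := div_neg_of_neg_of_pos hnum (by linarith)
          _ < ε := hε
    exact ⟨hupper ht, hlower ht⟩
  have main : ∀ t ∈ Set.Icc (0:ℝ) h, |y t| ≤ M := by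
    intro t ht
    rw [abs_le]
    constructor
    · have : ∀ ε > (0:ℝ), -y t ≤ M + ε := by
        intro ε hε
        have hε' : 0 < ε / (1 + h) := div_pos hε (by linarith)
        have := (barrier _ hε' t ht).2
        have ht2 : t ≤ h := ht.2
        have : -y t ≤ M + ε / (1 + h) * (1 + h) := by nlinarith [this]
        rwa [div_mul_cancel₀ ε (by linarith : (1:ℝ) + h ≠ 0)] at this
      linarith [le_of_forall_pos_le_add this]
    · have : ∀ ε > (0:ℝ), y t ≤ M + ε := by
        intro ε hε
        have hε' : 0 < ε / (1 + h) := div_pos hε (by linarith)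
        have := (barrier _ hε' t ht).1
        have ht2 : t ≤ h := ht.2
        have : y t ≤ M + ε / (1 + h) * (1 + h) := by nlinarith [this]
        rwa [div_mul_cancel₀ ε (by linarith : (1:ℝ) + h ≠ 0)] at this
      exact le_of_forall_pos_le_add this
  refine ⟨main, ?_⟩
  have hMK : M ≤ K := max_le (hxleK h hhS) (by linarith)
  apply ciSup_le
  intro t
  by_cases ht : t ∈ Set.Icc (0:ℝ) h
  · rw [ciSup_pos ht]
    exact (main t ht).trans hMK
  · rw [ciSup_neg ht, Real.sSup_empty]
    exact hK0
end
end

section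
/- Contraction at the endpoint for the one-step delay map (inequality (pf2:10)). Fix h > 0, let x : [0,h] → ℝ be continuous with x(t) + h > 0 for all t ∈ [0,h], and let y : [0,h] → ℝ be the solution of y′(t) = (x(t) − 2y(t))/(2(x(t) + h)) with y(0) = x(h). Then |y(h)| ≤ κ(‖x‖) · ‖x‖, where κ(r) = max{ 3/4, exp(−h/(3(r + h))) }. -/
open Set

noncomputable section

/-- Comparison lemma: if `f(0) ≤ M` and whenever `f > M/2` the derivative satisfies the
upper-solution inequality, then `f h ≤ M/2 + (M/2) exp(-h/(M+h))`. -/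
lemma comp_aux (h M : ℝ) (hh : 0 < h) (hM : 0 ≤ M) (f g : ℝ → ℝ)
    (hf : ∀ t ∈ Icc (0:ℝ) h, HasDerivWithinAt f (g t) (Icc 0 h) t)
    (hf0 : f 0 ≤ M)
    (hg : ∀ t ∈ Icc (0:ℝ) h, M/2 < f t → g t ≤ (M - 2 * f t) / (2*(M+h))) :
    f h ≤ M/2 + M/2 * Real.exp (-h/(M+h)) := by
  have hMh : 0 < M + h := by linarith
  set v : ℝ → ℝ := fun t => M/2 + M/2 * Real.exp (-t/(M+h)) with hv
  have hv' : ∀ t : ℝ, HasDerivAt v (-(M/2) * Real.exp (-t/(M+h)) / (M+h)) t := by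
    intro t
    have h1 : HasDerivAt (fun t : ℝ => -t/(M+h)) (-1/(M+h)) t := by
      simpa using ((hasDerivAt_id t).neg.div_const (M+h))
    have h2 := (h1.exp.const_mul (M/2)).const_add (M/2)
    exact h2.congr_deriv (by ring)
  have hfc : ContinuousOn f (Icc 0 h) := fun t ht => (hf t ht).continuousWithinAt
  have key : ∀ ε : ℝ, 0 < ε → f h ≤ v h + ε * (1 + h) := by
    intro ε hε
    have := image_le_of_deriv_right_lt_deriv_boundary (f := f) (f' := g) (a := 0) (b := h)
      hfc
      (fun t ht => ((hf t ⟨ht.1, ht.2.le⟩).mono (Icc_subset_Icc_left ht.1)).mono_of_mem_nhdsWithin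
        (Icc_mem_nhdsGE_of_mem ⟨le_refl t, ht.2⟩))
      (B := fun t => v t + ε * (1 + t))
      (B' := fun t => -(M/2) * Real.exp (-t/(M+h)) / (M+h) + ε)
      (by
        simp only [hv]
        have : Real.exp (-0/(M+h)) = 1 := by norm_num
        rw [this]; nlinarith)
      (fun t => ((hv' t).add (((hasDerivAt_id t).const_add 1).const_mul ε)).congr_deriv (by ring))
      ?_ (right_mem_Icc.2 hh.le)
    · exact this
    · intro t ht heq
      have hE : 0 < Real.exp (-t/(M+h)) := Real.exp_pos _
      have hfg : M/2 < f t := by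
        have hvt : v t = M/2 + M/2 * Real.exp (-t/(M+h)) := rfl
        have : f t = v t + ε * (1 + t) := heq
        rw [hvt] at this
        have h1t : 0 < 1 + t := by linarith [ht.1]
        nlinarith [mul_pos hε h1t, mul_nonneg (by linarith : (0:ℝ) ≤ M/2) hE.le]
      have hb := hg t ⟨ht.1, ht.2.le⟩ hfg
      have : (M - 2 * f t) / (2*(M+h)) = -(M/2) * Real.exp (-t/(M+h)) / (M+h) - ε * (1+t)/(M+h) := by
        rw [heq]
        field_simp
        simp only [hv, neg_div]
        ring
      have h1t : 0 < 1 + t := by linarith [ht.1]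
      have : (M - 2 * f t) / (2*(M+h)) < -(M/2) * Real.exp (-t/(M+h)) / (M+h) + ε := by
        rw [this]
        have : 0 < ε * (1+t)/(M+h) := by positivity
        linarith
      linarith [hb]
  have : ∀ ε' : ℝ, 0 < ε' → f h ≤ v h + ε' := by
    intro ε' hε'
    have h1h : 0 < 1 + h := by linarith
    have := key (ε'/(1+h)) (by positivity)
    calc f h ≤ v h + ε'/(1+h) * (1 + h) := this
    _ = v h + ε' := by field_simp
  exact le_of_forall_pos_le_add this

/-- **Contraction at the endpoint for the one-step delay map (inequality (pf2:10)).**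
Fix `h > 0`, let `x : [0,h] → ℝ` be continuous with `x(t) + h > 0`, and let `y` solve
`y′ = (x - 2y)/(2(x + h))` on `[0,h]` with `y(0) = x(h)`. Then
`|y(h)| ≤ κ(‖x‖) ‖x‖` where `κ(r) = max(3/4, exp(-h/(3(r+h))))`. -/
theorem delay_map_endpoint_contraction
    (h : ℝ) (hh : 0 < h) (x y : ℝ → ℝ)
    (hxc : ContinuousOn x (Set.Icc 0 h))
    (hxpos : ∀ t ∈ Set.Icc (0:ℝ) h, 0 < x t + h)
    (hy0 : y 0 = x h)
    (hyode : ∀ t ∈ Set.Icc (0:ℝ) h,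
      HasDerivWithinAt y ((x t - 2 * y t) / (2 * (x t + h))) (Set.Icc 0 h) t)
    (κ : ℝ → ℝ) (hκ : ∀ r, κ r = max (3/4) (Real.exp (-h / (3*(r + h))))) :
    |y h| ≤ κ (⨆ s ∈ Set.Icc (0:ℝ) h, |x s|) * ⨆ s ∈ Set.Icc (0:ℝ) h, |x s| := by
  set M := ⨆ s ∈ Set.Icc (0:ℝ) h, |x s| with hMdef
  -- boundedness of the sup
  obtain ⟨C, hC⟩ := (isCompact_Icc (a := (0:ℝ)) (b := h)).exists_bound_of_continuousOn hxc
  have hbdd : BddAbove (Set.range fun s => ⨆ _ : s ∈ Set.Icc (0:ℝ) h, |x s|) := by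
    refine ⟨max C 0, ?_⟩
    rintro _ ⟨s, rfl⟩
    by_cases hs : s ∈ Set.Icc (0:ℝ) h
    · show (⨆ _ : s ∈ Set.Icc (0:ℝ) h, |x s|) ≤ max C 0
      rw [ciSup_pos hs]
      exact le_max_of_le_left (by simpa using hC s hs)
    · simp [hs, Real.iSup_of_isEmpty, le_max_right]
  have hMb : ∀ t ∈ Set.Icc (0:ℝ) h, |x t| ≤ M := by
    intro t ht
    rw [hMdef, ← ciSup_pos (p := t ∈ Set.Icc (0:ℝ) h) (f := fun _ => |x t|) ht]
    exact le_ciSup hbdd t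
  have h0mem : (0:ℝ) ∈ Set.Icc (0:ℝ) h := ⟨le_refl 0, hh.le⟩
  have hhmem : h ∈ Set.Icc (0:ℝ) h := ⟨hh.le, le_refl h⟩
  have hM0 : 0 ≤ M := le_trans (abs_nonneg _) (hMb 0 h0mem)
  have hMh : 0 < M + h := by linarith
  -- derivative comparison facts
  have hxle : ∀ t ∈ Set.Icc (0:ℝ) h, x t ≤ M := fun t ht => le_trans (le_abs_self _) (hMb t ht)
  have hxge : ∀ t ∈ Set.Icc (0:ℝ) h, -M ≤ x t := fun t ht => neg_le.1 (le_trans (neg_le_abs _) (hMb t ht))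
  -- upper bound
  have hup : y h ≤ M/2 + M/2 * Real.exp (-h/(M+h)) := by
    apply comp_aux h M hh hM0 y (fun t => (x t - 2 * y t) / (2 * (x t + h))) hyode
      (by rw [hy0]; exact le_trans (le_abs_self _) (hMb h hhmem))
    intro t ht hyt
    have hx1 := hxle t ht
    have hx2 := hxpos t ht
    rw [div_le_div_iff₀ (by linarith) (by linarith)]
    nlinarith [mul_nonneg (by linarith : (0:ℝ) ≤ M - x t) (by linarith : (0:ℝ) ≤ h + 2 * y t)]
  -- lower bound
  have hlow : -y h ≤ M/2 + M/2 * Real.exp (-h/(M+h)) := by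
    apply comp_aux h M hh hM0 (fun t => -y t)
      (fun t => -((x t - 2 * y t) / (2 * (x t + h))))
      (fun t ht => (hyode t ht).neg)
      (by show -y 0 ≤ M; rw [hy0]; exact le_trans (neg_le_abs _) (hMb h hhmem))
    intro t ht hyt
    have hx1 := hxge t ht
    have hx2 := hxpos t ht
    have hx3 := hxle t ht
    rw [show -((x t - 2 * y t) / (2 * (x t + h))) = (2 * y t - x t) / (2 * (x t + h)) by ring]
    rw [div_le_div_iff₀ (by linarith) (by linarith)]
    nlinarith [mul_nonneg (by linarith : (0:ℝ) ≤ M + x t) (by linarith : (0:ℝ) ≤ M + h),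
      mul_nonneg (by linarith : (0:ℝ) ≤ M - x t) (by linarith : (0:ℝ) ≤ -M - 2 * y t)]
  have habs : |y h| ≤ M/2 + M/2 * Real.exp (-h/(M+h)) := abs_le.2 ⟨by linarith, hup⟩
  -- final arithmetic
  set t := Real.exp (-h / (3*(M + h))) with htdef
  have ht0 : 0 < t := Real.exp_pos _
  have ht1 : t ≤ 1 := Real.exp_le_one_iff.2 (by
    apply div_nonpos_of_nonpos_of_nonneg <;> linarith)
  have hcube : Real.exp (-h/(M+h)) = t^3 := by
    rw [htdef, ← Real.exp_nat_mul]
    congr 1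
    push_cast
    field_simp
  rw [hκ]
  rcases le_or_gt (t^3) (1/2) with hc | hc
  · have : M/2 + M/2 * Real.exp (-h/(M+h)) ≤ 3/4 * M := by
      rw [hcube]; nlinarith
    calc |y h| ≤ 3/4 * M := le_trans habs this
    _ ≤ max (3/4) t * M := by
        apply mul_le_mul_of_nonneg_right (le_max_left _ _) hM0
  · have hkey : 1 + t^3 ≤ 2 * t := by
      nlinarith [sq_nonneg (1 - t), sq_nonneg t]
    have : M/2 + M/2 * Real.exp (-h/(M+h)) ≤ t * M := by
      rw [hcube]; nlinarith
    calc |y h| ≤ t * M := le_trans habs this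
    _ ≤ max (3/4) t * M := mul_le_mul_of_nonneg_right (le_max_right _ _) hM0
end
end

section
/- Two-step contraction of the delay map (second inequality of (pf2:6)). Fix h > 0, let x : [0,h] → ℝ be continuous with x(t) + h > 0 for all t ∈ [0,h], and let y : [0,h] → ℝ be the solution of y′(t) = (x(t) − 2y(t))/(2(x(t) + h)) with y(0) = x(h). Suppose also that y(t) + h > 0 for all t ∈ [0,h], and let z : [0,h] → ℝ be the solution of z′(t) = (y(t) − 2z(t))/(2(y(t) + h)) with z(0) = y(h). Then ‖z‖ ≤ κ(‖x‖) · ‖x‖, where κ(r) = max{ 3/4, exp(−h/(3(r + h))) }. -/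
open Set Topology

noncomputable section


/-- ε-version of the one-step comparison estimate. -/
lemma delay_key_eps (h M K ε : ℝ) (hh : 0 < h) (hM : 0 ≤ M) (hK : 0 ≤ K) (hε : 0 < ε)
    (x p y : ℝ → ℝ)
    (hxb : ∀ t ∈ Icc (0:ℝ) h, x t ≤ M)
    (hp0 : ∀ t ∈ Icc (0:ℝ) h, 0 < p t)
    (hpM : ∀ t ∈ Icc (0:ℝ) h, p t ≤ M + h)
    (hyode : ∀ t ∈ Icc (0:ℝ) h, HasDerivWithinAt y ((x t - 2 * y t) / (2 * p t)) (Icc 0 h) t)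
    (hy0 : y 0 ≤ M / 2 + K) :
    ∀ t ∈ Icc (0:ℝ) h, y t ≤ M / 2 + (K + ε) * Real.exp (-t / (M + h + ε)) := by
  set c := M + h + ε with hc
  have hc0 : 0 < c := by simp only [hc]; linarith
  have hKε : 0 < K + ε := by linarith
  intro t ht
  refine image_le_of_deriv_right_lt_deriv_boundary (f := y)
    (f' := fun t => (x t - 2 * y t) / (2 * p t))
    (B := fun t => M / 2 + (K + ε) * Real.exp (-t / c))
    (B' := fun t => (K + ε) * (Real.exp (-t / c) * (-1 / c)))
    (fun s hs => (hyode s hs).continuousWithinAt) ?_ ?_ ?_ ?_ ht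
  · -- right derivative of y
    intro s hs
    have hmem : Icc (0:ℝ) h ∈ 𝓝[Ici s] s := by
      rw [mem_nhdsWithin]
      exact ⟨Iio h, isOpen_Iio, hs.2, fun u hu => ⟨hs.1.trans hu.2, hu.1.le⟩⟩
    exact (hyode s ⟨hs.1, hs.2.le⟩).mono_of_mem_nhdsWithin hmem
  · -- initial condition
    simp only [neg_zero, zero_div, Real.exp_zero, mul_one]
    linarith
  · -- derivative of B
    intro s
    exact (((((hasDerivAt_id s).neg.div_const c).exp).const_mul (K + ε)).const_add (M / 2))
  · -- the crossing bound
    intro s hs hcross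
    have hsI : s ∈ Icc (0:ℝ) h := ⟨hs.1, hs.2.le⟩
    have hP : 0 < p s := hp0 s hsI
    have hPc : p s < c := lt_of_le_of_lt (hpM s hsI) (by simp only [hc]; linarith)
    have hE : 0 < Real.exp (-s / c) := Real.exp_pos _
    have hxs : x s ≤ M := hxb s hsI
    have hyeq : y s = M / 2 + (K + ε) * Real.exp (-s / c) := hcross
    have h1 : (x s - 2 * y s) / (2 * p s) ≤ -((K + ε) * Real.exp (-s / c)) / p s := by
      rw [div_le_div_iff₀ (by positivity) hP]
      nlinarith [mul_pos hKε hE, mul_pos (mul_pos hKε hE) hP]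
    have h2 : -((K + ε) * Real.exp (-s / c)) / p s < -((K + ε) * Real.exp (-s / c)) / c := by
      have h3 := neg_lt_neg (div_lt_div_of_pos_left (mul_pos hKε hE) hP hPc)
      simp only [neg_div] at h3 ⊢
      exact h3
    have h4 : -((K + ε) * Real.exp (-s / c)) / c = (K + ε) * (Real.exp (-s / c) * (-1 / c)) := by
      field_simp
    calc (x s - 2 * y s) / (2 * p s) ≤ -((K + ε) * Real.exp (-s / c)) / p s := h1
      _ < -((K + ε) * Real.exp (-s / c)) / c := h2
      _ = (K + ε) * (Real.exp (-s / c) * (-1 / c)) := h4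


/-- limit version -/
lemma delay_key (h M K : ℝ) (hh : 0 < h) (hM : 0 ≤ M) (hK : 0 ≤ K)
    (x p y : ℝ → ℝ)
    (hxb : ∀ t ∈ Icc (0:ℝ) h, x t ≤ M)
    (hp0 : ∀ t ∈ Icc (0:ℝ) h, 0 < p t)
    (hpM : ∀ t ∈ Icc (0:ℝ) h, p t ≤ M + h)
    (hyode : ∀ t ∈ Icc (0:ℝ) h, HasDerivWithinAt y ((x t - 2 * y t) / (2 * p t)) (Icc 0 h) t)
    (hy0 : y 0 ≤ M / 2 + K) :
    ∀ t ∈ Icc (0:ℝ) h, y t ≤ M / 2 + K * Real.exp (-t / (M + h)) := by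
  intro t ht
  have hMh : (0:ℝ) < M + h := by linarith
  have hcont : ContinuousAt (fun ε : ℝ => M / 2 + (K + ε) * Real.exp (-t / (M + h + ε))) 0 := by
    have hne : M + h + (0:ℝ) ≠ 0 := by linarith
    exact continuousAt_const.add
      ((continuousAt_const.add continuousAt_id).mul
        (Real.continuous_exp.continuousAt.comp
          (continuousAt_const.div (continuousAt_const.add continuousAt_id) hne)))
  have htend : Filter.Tendsto (fun ε : ℝ => M / 2 + (K + ε) * Real.exp (-t / (M + h + ε)))
      (𝓝[>] (0:ℝ)) (𝓝 (M / 2 + K * Real.exp (-t / (M + h)))) := by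
    have h1 := hcont.tendsto.mono_left (nhdsWithin_le_nhds (s := Ioi (0:ℝ)))
    simpa using h1
  refine ge_of_tendsto htend ?_
  filter_upwards [self_mem_nhdsWithin] with ε hε
  exact delay_key_eps h M K ε hh hM hK hε x p y hxb hp0 hpM hyode hy0 t ht

/-- **Two-step contraction of the delay map (second inequality of (pf2:6)).**
Fix `h > 0`, let `x : [0,h] → ℝ` be continuous with `x(t) + h > 0`, let `y` solve
`y′ = (x - 2y)/(2(x + h))` on `[0,h]` with `y(0) = x(h)`, suppose `y(t) + h > 0`
on `[0,h]`, and let `z` solve `z′ = (y - 2z)/(2(y + h))` on `[0,h]` with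
`z(0) = y(h)`. Then `‖z‖ ≤ κ(‖x‖) ‖x‖` where `κ(r) = max(3/4, exp(-h/(3(r+h))))`. -/
theorem delay_map_two_step_contraction
    (h : ℝ) (hh : 0 < h) (x y z : ℝ → ℝ)
    (hxc : ContinuousOn x (Set.Icc 0 h))
    (hxpos : ∀ t ∈ Set.Icc (0:ℝ) h, 0 < x t + h)
    (hy0 : y 0 = x h)
    (hyode : ∀ t ∈ Set.Icc (0:ℝ) h,
      HasDerivWithinAt y ((x t - 2 * y t) / (2 * (x t + h))) (Set.Icc 0 h) t)
    (hypos : ∀ t ∈ Set.Icc (0:ℝ) h, 0 < y t + h)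
    (hz0 : z 0 = y h)
    (hzode : ∀ t ∈ Set.Icc (0:ℝ) h,
      HasDerivWithinAt z ((y t - 2 * z t) / (2 * (y t + h))) (Set.Icc 0 h) t)
    (κ : ℝ → ℝ) (hκ : ∀ r, κ r = max (3/4) (Real.exp (-h / (3*(r + h))))) :
    (⨆ t ∈ Set.Icc (0:ℝ) h, |z t|)
      ≤ κ (⨆ s ∈ Set.Icc (0:ℝ) h, |x s|) * ⨆ s ∈ Set.Icc (0:ℝ) h, |x s| := by
  set M := ⨆ s ∈ Set.Icc (0:ℝ) h, |x s| with hMdef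
  -- the sup bounds
  obtain ⟨s0, hs0, hmax⟩ := isCompact_Icc.exists_isMaxOn ⟨0, le_refl (0:ℝ), hh.le⟩ hxc.abs
  have hbdd : BddAbove (range fun s => ⨆ _ : s ∈ Icc (0:ℝ) h, |x s|) := by
    refine ⟨|x s0|, ?_⟩
    rintro _ ⟨s, rfl⟩
    dsimp only
    by_cases hs : s ∈ Icc (0:ℝ) h
    · rw [ciSup_pos hs]; exact hmax hs
    · haveI : IsEmpty (s ∈ Icc (0:ℝ) h) := ⟨hs⟩
      rw [Real.iSup_of_isEmpty]; positivity
  have hMb : ∀ s ∈ Icc (0:ℝ) h, |x s| ≤ M := by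
    intro s hs
    have h1 := le_ciSup hbdd s
    rwa [ciSup_pos hs] at h1
  have hM0 : (0:ℝ) ≤ M := (abs_nonneg _).trans (hMb 0 ⟨le_refl _, hh.le⟩)
  have hMh : (0:ℝ) < M + h := by linarith
  have hexp1 : ∀ t ∈ Icc (0:ℝ) h, Real.exp (-t / (M + h)) ≤ 1 := by
    intro t ht
    rw [← Real.exp_zero]
    apply Real.exp_le_exp.2
    rw [neg_div]
    have : 0 ≤ t / (M + h) := div_nonneg ht.1 hMh.le
    linarith
  -- bounds on y
  have hxup : ∀ t ∈ Icc (0:ℝ) h, x t ≤ M := fun t ht => (le_abs_self _).trans (hMb t ht)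
  have hxlow : ∀ t ∈ Icc (0:ℝ) h, -x t ≤ M := fun t ht => (neg_le_abs _).trans (hMb t ht)
  have hpMx : ∀ t ∈ Icc (0:ℝ) h, x t + h ≤ M + h := fun t ht => by linarith [hxup t ht]
  have hyub := delay_key h M (M/2) hh hM0 (by linarith) x (fun t => x t + h) y
    hxup hxpos hpMx hyode (by rw [hy0]; linarith [hxup h ⟨hh.le, le_refl h⟩])
  have hylb := delay_key h M (M/2) hh hM0 (by linarith) (fun t => -x t) (fun t => x t + h)
    (fun t => -y t) hxlow hxpos hpMx
    (fun t ht => by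
      have h1 := (hyode t ht).neg
      have h2 : (-x t - 2 * -y t) / (2 * (x t + h)) = -((x t - 2 * y t) / (2 * (x t + h))) := by ring
      rw [h2]; exact h1)
    (by rw [hy0]; linarith [hxlow h ⟨hh.le, le_refl h⟩])
  have hyabs : ∀ t ∈ Icc (0:ℝ) h, |y t| ≤ M / 2 + M / 2 * Real.exp (-t / (M + h)) := by
    intro t ht
    exact abs_le.2 ⟨by linarith [hylb t ht], hyub t ht⟩
  have hyM : ∀ t ∈ Icc (0:ℝ) h, |y t| ≤ M := by
    intro t ht
    have h1 := hyabs t ht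
    have h2 := hexp1 t ht
    have h3 := Real.exp_pos (-t / (M + h))
    nlinarith
  -- bounds on z
  set K' := M / 2 * Real.exp (-h / (M + h)) with hK'def
  have hK'0 : 0 ≤ K' := by positivity
  have hendpt : |y h| ≤ M / 2 + K' := hyabs h ⟨hh.le, le_refl h⟩
  have hyup : ∀ t ∈ Icc (0:ℝ) h, y t ≤ M := fun t ht => (le_abs_self _).trans (hyM t ht)
  have hylow : ∀ t ∈ Icc (0:ℝ) h, -y t ≤ M := fun t ht => (neg_le_abs _).trans (hyM t ht)
  have hpMy : ∀ t ∈ Icc (0:ℝ) h, y t + h ≤ M + h := fun t ht => by linarith [hyup t ht]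
  have hzub := delay_key h M K' hh hM0 hK'0 y (fun t => y t + h) z
    hyup hypos hpMy hzode (by rw [hz0]; linarith [(le_abs_self (y h)).trans hendpt])
  have hzlb := delay_key h M K' hh hM0 hK'0 (fun t => -y t) (fun t => y t + h)
    (fun t => -z t) hylow hypos hpMy
    (fun t ht => by
      have h1 := (hzode t ht).neg
      have h2 : (-y t - 2 * -z t) / (2 * (y t + h)) = -((y t - 2 * z t) / (2 * (y t + h))) := by ring
      rw [h2]; exact h1)
    (by rw [hz0]; linarith [(neg_le_abs (y h)).trans hendpt])
  have hzabs : ∀ t ∈ Icc (0:ℝ) h, |z t| ≤ M / 2 + K' := by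
    intro t ht
    have h1 := hzub t ht
    have h2 := hzlb t ht
    have h3 := hexp1 t ht
    have h4 := (Real.exp_pos (-t / (M + h))).le
    refine abs_le.2 ⟨?_, ?_⟩ <;> nlinarith
  -- algebra with β
  set β := Real.exp (-h / (3 * (M + h))) with hβdef
  have hβpos : 0 < β := Real.exp_pos _
  have hβlt1 : β < 1 := by
    rw [hβdef]
    apply Real.exp_lt_one_iff.2
    rw [neg_div]
    have : 0 < h / (3 * (M + h)) := by positivity
    linarith
  have hβ3 : β ^ 3 = Real.exp (-h / (M + h)) := by
    rw [hβdef, show (-h / (M + h)) = (-h / (3 * (M + h))) + (-h / (3 * (M + h))) + (-h / (3 * (M + h))) by field_simp; ring]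
    rw [Real.exp_add, Real.exp_add]; ring
  have key : M / 2 + K' ≤ max (3/4) β * M := by
    have hK'eq : K' = M / 2 * β ^ 3 := by rw [hK'def, hβ3]
    rcases le_or_gt (β ^ 3) (1/2) with hb | hb
    · have h1 : M / 2 + K' ≤ 3/4 * M := by rw [hK'eq]; nlinarith
      exact h1.trans (mul_le_mul_of_nonneg_right (le_max_left _ _) hM0)
    · have hsq : (1:ℝ)/2 < β ^ 2 := by nlinarith
      have hb1 : (1:ℝ)/2 < β := by nlinarith
      have hfac : (0:ℝ) ≤ β ^ 2 + β - 1 := by nlinarith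
      have hββ : β ^ 3 + 1 ≤ 2 * β := by
        nlinarith [mul_nonneg (sub_nonneg.2 hβlt1.le) hfac]
      have h1 : M / 2 + K' ≤ β * M := by rw [hK'eq]; nlinarith
      exact h1.trans (mul_le_mul_of_nonneg_right (le_max_right _ _) hM0)
  have hbound : ∀ t ∈ Icc (0:ℝ) h, |z t| ≤ κ M * M := by
    intro t ht
    rw [hκ]
    exact (hzabs t ht).trans key
  have hκM0 : 0 ≤ κ M * M := by
    apply mul_nonneg _ hM0
    rw [hκ]
    exact le_trans (by norm_num) (le_max_left _ _)
  refine Real.iSup_le (fun t => ?_) hκM0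
  by_cases ht : t ∈ Icc (0:ℝ) h
  · rw [ciSup_pos ht]; exact hbound t ht
  · haveI : IsEmpty (t ∈ Icc (0:ℝ) h) := ⟨ht⟩
    rw [Real.iSup_of_isEmpty]; exact hκM0
end
end
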